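/- Let R be a ring and let 0 → M₃ → M₂ → M₁ → 0 be a short exact sequence of left R-modules with M₃ ≠ 0. If M₁ is Gorenstein projective, then the Gorenstein projective dimensions of M₃ and M₂ are equal: Gpd_R(M₃) = Gpd_R(M₂). -/

import Mathlib

universe u

open LinearMap

section GorensteinDefs

variable (S : Type u) [Ring S]

/-- A complete projective resolution: a doubly infinite exact sequence of projective
`S`-modules which stays exact after applying `Hom_S(-, Q)` for every projective module `Q`,
together with an identification of `G` with the image of the 0-th differential. -/
structure CompleteProjectiveResolution (G : Type u) [AddCommGroup G] [Module S G] where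
  P : ℤ → Type u
  [acg : ∀ i, AddCommGroup (P i)]
  [mod : ∀ i, Module S (P i)]
  projective : ∀ i, Module.Projective S (P i)
  d : ∀ i, P i →ₗ[S] P (i + 1)
  exact : ∀ i, LinearMap.range (d i) = LinearMap.ker (d (i + 1))
  homExact : ∀ (Q : Type u) [AddCommGroup Q] [Module S Q], Module.Projective S Q →
      ∀ i (f : P (i + 1) →ₗ[S] Q), f.comp (d i) = 0 →
        ∃ g : P (i + 1 + 1) →ₗ[S] Q, g.comp (d (i + 1)) = f
  equiv : Nonempty (G ≃ₗ[S] LinearMap.range (d 0))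

attribute [instance] CompleteProjectiveResolution.acg CompleteProjectiveResolution.mod

/-- A module is Gorenstein projective if it admits a complete projective resolution. -/
def IsGorensteinProjective (G : Type u) [AddCommGroup G] [Module S G] : Prop :=
  Nonempty (CompleteProjectiveResolution S G)

/-- An exact sequence `0 → G n → G (n-1) → ⋯ → G 1 → G 0 → M → 0` of `S`-modules,
encoded as an `ℕ`-indexed exact sequence whose entries in degrees `> n` are zero. -/
structure FiniteExactSequenceTo (M : Type u) [AddCommGroup M] [Module S M] (n : ℕ) where
  G : ℕ → Type u
  [acg : ∀ i, AddCommGroup (G i)]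
  [mod : ∀ i, Module S (G i)]
  d : ∀ i, G (i + 1) →ₗ[S] G i
  aug : G 0 →ₗ[S] M
  aug_surjective : Function.Surjective aug
  exact_aug : LinearMap.range (d 0) = LinearMap.ker aug
  exact : ∀ i, LinearMap.range (d (i + 1)) = LinearMap.ker (d i)
  trivial_of_gt : ∀ i, n < i → Subsingleton (G i)

attribute [instance] FiniteExactSequenceTo.acg FiniteExactSequenceTo.mod

/-- `M` admits an exact sequence `0 → G n → ⋯ → G 0 → M → 0` with all `G i`
Gorenstein projective. -/
def GorensteinProjectiveDimensionLE (M : Type u) [AddCommGroup M] [Module S M] (n : ℕ) : Prop :=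
  ∃ E : FiniteExactSequenceTo S M n, ∀ i ≤ n, IsGorensteinProjective S (E.G i)

/-- The Gorenstein projective dimension `Gpd_S(M)`, as an element of `ℕ∞`. -/
noncomputable def gpd (M : Type u) [AddCommGroup M] [Module S M] : ℕ∞ :=
  sInf {k : ℕ∞ | ∃ n : ℕ, k = n ∧ GorensteinProjectiveDimensionLE S M n}

/-- `M` admits an exact sequence `0 → P n → ⋯ → P 0 → M → 0` with all `P i` projective. -/
def ProjectiveDimensionLE (M : Type u) [AddCommGroup M] [Module S M] (n : ℕ) : Prop :=
  ∃ E : FiniteExactSequenceTo S M n, ∀ i ≤ n, Module.Projective S (E.G i)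

/-- The projective dimension `pd_S(M)`, as an element of `ℕ∞`. -/
noncomputable def pd (M : Type u) [AddCommGroup M] [Module S M] : ℕ∞ :=
  sInf {k : ℕ∞ | ∃ n : ℕ, k = n ∧ ProjectiveDimensionLE S M n}

end GorensteinDefs

namespace GPAux

open Function Submodule LinearMap

variable {S : Type u} [Ring S]

section Helpers

/-- Transport a member of a family of modules along an index equality. -/
def famCast {ι : Type} {Z : ι → Type u} [∀ i, AddCommGroup (Z i)] [∀ i, Module S (Z i)]
    {i j : ι} (h : i = j) : Z i ≃ₗ[S] Z j := by subst h; exact LinearEquiv.refl S (Z i)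

variable {Q Y N W M : Type u}
variable [AddCommGroup Q] [Module S Q] [AddCommGroup Y] [Module S Y]
variable [AddCommGroup N] [Module S N] [AddCommGroup W] [Module S W]
variable [AddCommGroup M] [Module S M]

theorem factor_surj (p : Y →ₗ[S] N) (hp : Surjective p) (φ : Y →ₗ[S] W)
    (h : ker p ≤ ker φ) : ∃ ψ : N →ₗ[S] W, ψ.comp p = φ := by
  let e := p.quotKerEquivOfSurjective hp
  have he : ∀ y : Y, e (Submodule.Quotient.mk y) = p y := fun y => rfl
  refine ⟨(Submodule.liftQ (ker p) φ h).comp e.symm.toLinearMap, ?_⟩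
  ext y
  have h1 : e.symm (p y) = Submodule.Quotient.mk y := by
    apply e.injective; rw [LinearEquiv.apply_symm_apply, he]
  simp only [LinearMap.comp_apply, LinearEquiv.coe_coe, h1]
  exact Submodule.liftQ_apply _ _ _

theorem exists_retraction_of_section (ι : Q →ₗ[S] Y) (p : Y →ₗ[S] M) (hι : Injective ι)
    (hexact : range ι = ker p) (s : M →ₗ[S] Y) (hs : p.comp s = LinearMap.id) :
    ∃ r : Y →ₗ[S] Q, r.comp ι = LinearMap.id := by
  have hmem : ∀ y : Y, ((LinearMap.id : Y →ₗ[S] Y) - s.comp p) y ∈ range ι := by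
    intro y
    rw [hexact, LinearMap.mem_ker]
    have := congrArg (fun t => t (p y)) hs
    simp only [LinearMap.comp_apply, LinearMap.id_apply] at this
    simp only [LinearMap.sub_apply, LinearMap.comp_apply, LinearMap.id_apply, map_sub, this,
      sub_self]
  refine ⟨(LinearEquiv.ofInjective ι hι).symm.toLinearMap.comp
    (((LinearMap.id : Y →ₗ[S] Y) - s.comp p).codRestrict (range ι) hmem), ?_⟩
  ext q
  simp only [LinearMap.comp_apply, LinearMap.codRestrict_apply, LinearEquiv.coe_coe,
    LinearMap.id_apply]
  have hpι : p (ι q) = 0 := by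
    have : ι q ∈ ker p := hexact ▸ LinearMap.mem_range_self ι q
    exact this
  apply hι
  rw [LinearEquiv.ofInjective_symm_apply]
  simp [hpι]

theorem pcompι_eq_zero (ι : Q →ₗ[S] Y) (p : Y →ₗ[S] M) (hexact : range ι = ker p) (q : Q) :
    p (ι q) = 0 := by
  have : ι q ∈ ker p := hexact ▸ LinearMap.mem_range_self ι q
  exact this

theorem exists_section_of_retraction (ι : Q →ₗ[S] Y) (p : Y →ₗ[S] M)
    (hp : Surjective p) (hexact : range ι = ker p) (r : Y →ₗ[S] Q)
    (hr : r.comp ι = LinearMap.id) : ∃ s : M →ₗ[S] Y, p.comp s = LinearMap.id := by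
  have hker : ker p ≤ ker ((LinearMap.id : Y →ₗ[S] Y) - ι.comp r) := by
    intro y hy
    rw [← hexact] at hy
    obtain ⟨q, rfl⟩ := hy
    have := congrArg (fun t => t q) hr
    simp only [LinearMap.comp_apply, LinearMap.id_apply] at this
    simp [LinearMap.mem_ker, map_sub, this]
  obtain ⟨ψ, hψ⟩ := factor_surj p hp ((LinearMap.id : Y →ₗ[S] Y) - ι.comp r) hker
  refine ⟨ψ, ?_⟩
  ext m
  obtain ⟨y, rfl⟩ := hp m
  have h1 : ψ (p y) = y - ι (r y) := by
    have := congrArg (fun t => t y) hψ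
    simpa using this
  simp [h1, map_sub, pcompι_eq_zero ι p hexact]

end Helpers

end GPAux
namespace GPAux

variable {S : Type u} [Ring S]

open Function Submodule LinearMap

/-- `Ext¹(M, Q) = 0` for every projective `Q`, phrased concretely: every short exact
sequence `0 → Q → Y → M → 0` with `Q` projective admits a retraction `Y → Q`. -/
def ExtVanish (S : Type u) [Ring S] (M : Type u) [AddCommGroup M] [Module S M] : Prop :=
  ∀ (Q Y : Type u) [AddCommGroup Q] [Module S Q] [AddCommGroup Y] [Module S Y],
    Module.Projective S Q → ∀ (ι : Q →ₗ[S] Y) (p : Y →ₗ[S] M), Function.Injective ι →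
    Function.Surjective p → range ι = ker p → ∃ r : Y →ₗ[S] Q, r.comp ι = LinearMap.id

section EV

variable {Q Y N W M A B C V P : Type u}
variable [AddCommGroup Q] [Module S Q] [AddCommGroup Y] [Module S Y]
variable [AddCommGroup N] [Module S N] [AddCommGroup W] [Module S W]
variable [AddCommGroup M] [Module S M] [AddCommGroup A] [Module S A]
variable [AddCommGroup B] [Module S B] [AddCommGroup C] [Module S C]
variable [AddCommGroup V] [Module S V] [AddCommGroup P] [Module S P]

theorem extVanish_of_projective (h : Module.Projective S M) : ExtVanish S M := by
  intro Q Y _ _ _ _ projQ ι p hinj hsurj hex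
  haveI := h
  obtain ⟨s, hs⟩ := Module.projective_lifting_property p (LinearMap.id) hsurj
  exact exists_retraction_of_section ι p hinj hex s hs

theorem extVanish_of_equiv (e : M ≃ₗ[S] N) (h : ExtVanish S M) : ExtVanish S N := by
  intro Q Y _ _ _ _ projQ ι p hinj hsurj hex
  refine h Q Y projQ ι (e.symm.toLinearMap.comp p) hinj (e.symm.surjective.comp hsurj) ?_
  rw [hex]
  ext y
  simp [LinearMap.mem_ker]

theorem extVanish_section (h : ExtVanish S M) (projQ : Module.Projective S Q)
    (ι : Q →ₗ[S] Y) (p : Y →ₗ[S] M) (hinj : Injective ι) (hsurj : Surjective p)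
    (hex : range ι = ker p) : ∃ s : M →ₗ[S] Y, p.comp s = LinearMap.id := by
  obtain ⟨r, hr⟩ := h Q Y projQ ι p hinj hsurj hex
  exact exists_section_of_retraction ι p hsurj hex r hr

/-- Maps out of `N` lift along surjections with projective kernel, provided `Ext¹(N,proj)=0`. -/
theorem lift_of_extVanish (hN : ExtVanish S N) (projQ : Module.Projective S Q)
    (ι : Q →ₗ[S] Y) (p : Y →ₗ[S] M) (hinj : Injective ι) (hsurj : Surjective p)
    (hex : range ι = ker p) (u : N →ₗ[S] M) : ∃ v : N →ₗ[S] Y, p.comp v = u := by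
  classical
  set Wm : Submodule S (Y × N) := ker ((p.comp (LinearMap.fst S Y N)) - (u.comp (LinearMap.snd S Y N))) with hWm
  have memW : ∀ x : Y × N, x ∈ Wm ↔ p x.1 = u x.2 := by
    intro x
    simp [hWm, LinearMap.mem_ker, sub_eq_zero]
  have hι' : ∀ q : Q, (ι q, (0 : N)) ∈ Wm := by
    intro q; rw [memW]; simp [pcompι_eq_zero ι p hex]
  let ιW : Q →ₗ[S] Wm := (LinearMap.prod ι 0).codRestrict Wm (fun q => hι' q)
  let pW : Wm →ₗ[S] N := (LinearMap.snd S Y N).comp Wm.subtype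
  have hinjW : Injective ιW := by
    intro q q' hqq
    have h' : (ιW q : Y × N) = (ιW q' : Y × N) := Subtype.ext_iff.mp hqq
    have h1 : (ιW q : Y × N).1 = (ιW q' : Y × N).1 := congrArg Prod.fst h'
    simpa only [ιW, LinearMap.codRestrict_apply, LinearMap.prod_apply, Pi.prod] using hinj h1
  have hsurjW : Surjective pW := by
    intro n
    obtain ⟨y, hy⟩ := hsurj (u n)
    refine ⟨⟨(y, n), (memW _).2 hy⟩, ?_⟩
    simp [pW]
  have hexW : range ιW = ker pW := by
    ext x
    simp only [LinearMap.mem_range, LinearMap.mem_ker]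
    constructor
    · rintro ⟨q, rfl⟩
      show (0 : Q →ₗ[S] N) q = 0; simp
    · intro hx
      have hx2 : (x : Y × N).2 = 0 := by simpa [pW] using hx
      have hx1 : p (x : Y × N).1 = 0 := by
        have := (memW _).1 x.2
        rw [hx2, map_zero] at this; exact this
      have : (x : Y × N).1 ∈ range ι := by rw [hex]; exact hx1
      obtain ⟨q, hq⟩ := this
      refine ⟨q, ?_⟩
      apply Subtype.ext
      have : (x : Y × N) = ((x : Y × N).1, (x : Y × N).2) := rfl
      show (ι q, (0 : Q →ₗ[S] N) q) = _
      rw [this, hx2, hq]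
      rfl
  obtain ⟨s, hs⟩ := extVanish_section hN projQ ιW pW hinjW hsurjW hexW
  refine ⟨((LinearMap.fst S Y N).comp Wm.subtype).comp s, ?_⟩
  ext n
  have h2 : pW (s n) = n := by
    have := congrArg (fun t => t n) hs; simpa using this
  have h1 : p ((s n : Y × N)).1 = u ((s n : Y × N)).2 := (memW _).1 (s n).2
  have h3 : ((s n : Y × N)).2 = n := by simpa [pW] using h2
  show p ((s n : Y × N)).1 = u n
  rw [h1, h3]

/-- Maps into projectives extend along injections whose cokernel has vanishing `Ext¹`. -/
theorem extend_of_extVanish (a : N →ₗ[S] Y) (b : Y →ₗ[S] C) (ha : Injective a)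
    (hb : Surjective b) (hab : range a = ker b) (hC : ExtVanish S C)
    (projQ : Module.Projective S Q) (u : N →ₗ[S] Q) :
    ∃ v : Y →ₗ[S] Q, v.comp a = u := by
  classical
  set Rm : Submodule S (Q × Y) := range (u.prod (-a)) with hRm
  let ιQ : Q →ₗ[S] (Q × Y) ⧸ Rm := Rm.mkQ.comp (LinearMap.inl S Q Y)
  have hkill : ∀ x ∈ Rm, b ((x : Q × Y).2) = 0 := by
    rintro x ⟨n, rfl⟩
    simp only [LinearMap.prod_apply, Function.prod, LinearMap.neg_apply, map_neg]
    rw [pcompι_eq_zero a b hab]; simp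
  let πC : (Q × Y) ⧸ Rm →ₗ[S] C := Rm.liftQ (b.comp (LinearMap.snd S Q Y)) (fun x hx => hkill x hx)
  have hinjQ : Injective ιQ := by
    intro q q' h
    have hsub : ιQ (q - q') = 0 := by rw [map_sub, h, sub_self]
    have hmem : ((q - q', (0:Y))) ∈ Rm := by
      rwa [show ιQ (q - q') = Rm.mkQ (q - q', 0) from rfl, Submodule.mkQ_apply,
        Submodule.Quotient.mk_eq_zero] at hsub
    obtain ⟨n, hn⟩ := hmem
    have hn2 : -a n = 0 := congrArg Prod.snd hn
    have hn0 : n = 0 := by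
      apply ha; rw [map_zero, ← neg_eq_zero]; exact hn2
    have hn1 : u n = q - q' := congrArg Prod.fst hn
    rw [hn0, map_zero] at hn1
    exact sub_eq_zero.mp hn1.symm
  have hsurjC : Surjective πC := by
    intro c
    obtain ⟨y, rfl⟩ := hb c
    exact ⟨Rm.mkQ (0, y), rfl⟩
  have hexC : range ιQ = ker πC := by
    ext x
    constructor
    · rintro ⟨q, rfl⟩
      simp only [LinearMap.mem_ker, ιQ, πC, LinearMap.comp_apply, Submodule.mkQ_apply,
        Submodule.liftQ_apply]
      exact (map_zero b : b 0 = 0)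
    · intro hx
      obtain ⟨⟨q, y⟩, rfl⟩ := Rm.mkQ_surjective x
      have hby : b y = 0 := hx
      have : y ∈ range a := by rw [hab]; exact hby
      obtain ⟨n, rfl⟩ := this
      refine ⟨q + u n, ?_⟩
      simp only [ιQ, LinearMap.comp_apply, Submodule.mkQ_apply, LinearMap.inl_apply]
      rw [Submodule.Quotient.eq]
      exact ⟨n, by simp [Prod.ext_iff]⟩
  obtain ⟨r, hr⟩ := hC Q ((Q × Y) ⧸ Rm) projQ ιQ πC hinjQ hsurjC hexC
  refine ⟨(r.comp Rm.mkQ).comp (LinearMap.inr S Q Y), ?_⟩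
  ext n
  have hmkeq : Rm.mkQ (0, a n) = Rm.mkQ (u n, 0) := by
    rw [Submodule.mkQ_apply, Submodule.mkQ_apply, Submodule.Quotient.eq]
    exact ⟨-n, by simp [Prod.ext_iff]⟩
  have hrn := congrArg (fun t => t (u n)) hr
  simp only [LinearMap.comp_apply, LinearMap.id_apply] at hrn ⊢
  rw [LinearMap.inr_apply, hmkeq]
  exact hrn

end EV

end GPAux
namespace GPAux

variable {S : Type u} [Ring S]

open Function Submodule LinearMap

section EV2

variable {Q Y N W M A B C V P : Type u}
variable [AddCommGroup Q] [Module S Q] [AddCommGroup Y] [Module S Y]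
variable [AddCommGroup N] [Module S N] [AddCommGroup W] [Module S W]
variable [AddCommGroup M] [Module S M] [AddCommGroup A] [Module S A]
variable [AddCommGroup B] [Module S B] [AddCommGroup C] [Module S C]
variable [AddCommGroup V] [Module S V] [AddCommGroup P] [Module S P]

/-- If `0 → N → P → M → 0` is exact with `P` projective and every map from `N` to a
projective extends to `P`, then `Ext¹(M, proj) = 0`. -/
theorem extVanish_of_pres (ιNP : N →ₗ[S] P) (π : P →ₗ[S] M)
    (hP : Module.Projective S P) (hsurj : Surjective π) (hex : range ιNP = ker π)
    (extProp : ∀ (Q' : Type u) [AddCommGroup Q'] [Module S Q'], Module.Projective S Q' →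
      ∀ u : N →ₗ[S] Q', ∃ v : P →ₗ[S] Q', v.comp ιNP = u) :
    ExtVanish S M := by
  intro Q Y _ _ _ _ projQ ιQ p hinjQ hsurjp hexQ
  haveI := hP
  obtain ⟨h, hh⟩ := Module.projective_lifting_property p π hsurjp
  have hmem : ∀ n : N, (h.comp ιNP) n ∈ range ιQ := by
    intro n
    rw [hexQ, LinearMap.mem_ker]
    have : p (h (ιNP n)) = π (ιNP n) := by
      have := congrArg (fun t => t (ιNP n)) hh; simpa using this
    rw [LinearMap.comp_apply, this, pcompι_eq_zero ιNP π hex]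
  set u' : N →ₗ[S] Q := (LinearEquiv.ofInjective ιQ hinjQ).symm.toLinearMap.comp
    ((h.comp ιNP).codRestrict (range ιQ) hmem) with hu'
  obtain ⟨w, hw⟩ := extProp Q projQ u'
  have hιQu' : ∀ n : N, ιQ (u' n) = h (ιNP n) := by
    intro n
    rw [hu']
    simp only [LinearMap.comp_apply, LinearEquiv.coe_coe]
    rw [LinearEquiv.ofInjective_symm_apply]
    simp
  have hker : ker π ≤ ker (h - ιQ.comp w) := by
    intro x hx
    rw [← hex] at hx
    obtain ⟨n, rfl⟩ := hx
    have hwn : w (ιNP n) = u' n := by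
      have := congrArg (fun t => t n) hw; simpa using this
    simp only [LinearMap.mem_ker, LinearMap.sub_apply, LinearMap.comp_apply, hwn, hιQu' n,
      sub_self]
  obtain ⟨s, hs⟩ := factor_surj π hsurj (h - ιQ.comp w) hker
  have hps : p.comp s = LinearMap.id := by
    ext m
    obtain ⟨x, rfl⟩ := hsurj m
    have h1 : s (π x) = h x - ιQ (w x) := by
      have := congrArg (fun t => t x) hs; simpa using this
    have h2 : p (h x) = π x := by
      have := congrArg (fun t => t x) hh; simpa using this
    simp only [LinearMap.comp_apply, LinearMap.id_apply, h1, map_sub, h2,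
      pcompι_eq_zero ιQ p hexQ, sub_zero]
  exact exists_retraction_of_section ιQ p hinjQ hexQ s hps

/-- `ExtVanish` is closed under extensions. -/
theorem extVanish_ses (a : A →ₗ[S] B) (b : B →ₗ[S] C) (ha : Injective a) (hb : Surjective b)
    (hex : range a = ker b) (hA : ExtVanish S A) (hC : ExtVanish S C) : ExtVanish S B := by
  intro Q Y _ _ _ _ projQ ιQ p hinj hsurj hexq
  set YA : Submodule S Y := comap p (range a) with hYA
  have memYA : ∀ y : Y, y ∈ YA ↔ p y ∈ range a := fun y => Iff.rfl
  have hι₁mem : ∀ q : Q, ιQ q ∈ YA := by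
    intro q
    rw [memYA, pcompι_eq_zero ιQ p hexq]
    exact zero_mem _
  set ι₁ : Q →ₗ[S] YA := ιQ.codRestrict YA hι₁mem with hι₁
  have hs0 : ∀ x : YA, (p.comp YA.subtype) x ∈ range a := fun x => x.2
  set p₁ : YA →ₗ[S] A := (LinearEquiv.ofInjective a ha).symm.toLinearMap.comp
    ((p.comp YA.subtype).codRestrict (range a) hs0) with hp₁
  have hap₁ : ∀ x : YA, a (p₁ x) = p (x : Y) := by
    intro x
    rw [hp₁]
    simp only [LinearMap.comp_apply, LinearEquiv.coe_coe]
    rw [LinearEquiv.ofInjective_symm_apply]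
    simp
  have hinj₁ : Injective ι₁ := by
    intro q q' h
    exact hinj (congrArg Subtype.val h)
  have hsurj₁ : Surjective p₁ := by
    intro α
    obtain ⟨y, hy⟩ := hsurj (a α)
    have hyY : y ∈ YA := by rw [memYA, hy]; exact ⟨α, rfl⟩
    exact ⟨⟨y, hyY⟩, ha (by rw [hap₁]; exact hy)⟩
  have hex₁ : range ι₁ = ker p₁ := by
    ext x
    constructor
    · rintro ⟨q, rfl⟩
      have : a (p₁ (ι₁ q)) = 0 := by
        rw [hap₁]
        exact pcompι_eq_zero ιQ p hexq q
      have := ha (by rw [this, map_zero] : a (p₁ (ι₁ q)) = a 0)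
      exact this
    · intro hx
      have hx' : p₁ x = 0 := hx
      have : p (x : Y) = 0 := by rw [← hap₁, hx', map_zero]
      have : (x : Y) ∈ range ιQ := by rw [hexq]; exact this
      obtain ⟨q, hq⟩ := this
      exact ⟨q, Subtype.ext hq⟩
  obtain ⟨rA, hrA⟩ := hA Q YA projQ ι₁ p₁ hinj₁ hsurj₁ hex₁
  have hbp_surj : Surjective (b.comp p) := hb.comp hsurj
  have hbp_ex : range YA.subtype = ker (b.comp p) := by
    rw [Submodule.range_subtype, LinearMap.ker_comp, ← hex, hYA]
  obtain ⟨v, hv⟩ := extend_of_extVanish YA.subtype (b.comp p) (Subtype.val_injective)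
    hbp_surj hbp_ex hC projQ rA
  refine ⟨v, ?_⟩
  ext q
  have h1 : v (YA.subtype (ι₁ q)) = rA (ι₁ q) := by
    have := congrArg (fun t => t (ι₁ q)) hv; simpa using this
  have h2 : rA (ι₁ q) = q := by
    have := congrArg (fun t => t q) hrA; simpa using this
  simp only [LinearMap.comp_apply, LinearMap.id_apply]
  have : ιQ q = YA.subtype (ι₁ q) := rfl
  rw [this, h1, h2]

/-- `ExtVanish` passes to direct summands. -/
theorem extVanish_summand (i : A →ₗ[S] V) (r : V →ₗ[S] A) (hri : r.comp i = LinearMap.id)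
    (hV : ExtVanish S V) : ExtVanish S A := by
  intro Q Y _ _ _ _ projQ ιQ p hinj hsurj hexq
  have hrival : ∀ x : A, r (i x) = x := by
    intro x; have := congrArg (fun t => t x) hri; simpa using this
  set K : Submodule S V := ker r with hK
  set p'' : Y × K →ₗ[S] V :=
    (i.comp (p.comp (LinearMap.fst S Y K))) + (K.subtype.comp (LinearMap.snd S Y K)) with hp''
  have hp''app : ∀ x : Y × K, p'' x = i (p x.1) + (x.2 : V) := fun x => rfl
  set ι'' : Q →ₗ[S] Y × K := LinearMap.prod ιQ 0 with hι''
  have hinj'' : Injective ι'' := by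
    intro q q' h
    exact hinj (congrArg Prod.fst h)
  have hsurj'' : Surjective p'' := by
    intro v
    obtain ⟨y, hy⟩ := hsurj (r v)
    have hmem : v - i (r v) ∈ K := by
      rw [hK, LinearMap.mem_ker, map_sub, hrival, sub_self]
    refine ⟨(y, ⟨v - i (r v), hmem⟩), ?_⟩
    rw [hp''app]
    simp only [hy]
    abel
  have hex'' : range ι'' = ker p'' := by
    ext x
    constructor
    · rintro ⟨q, rfl⟩
      rw [LinearMap.mem_ker, hp''app]
      simp only [hι'', LinearMap.prod_apply, Function.prod, pcompι_eq_zero ιQ p hexq, map_zero,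
        LinearMap.zero_apply]
      simp
    · intro hx
      rw [LinearMap.mem_ker, hp''app] at hx
      have hr0 : r (i (p x.1) + (x.2 : V)) = 0 := by rw [hx, map_zero]
      rw [map_add, hrival] at hr0
      have hx2r : r (x.2 : V) = 0 := x.2.2
      rw [hx2r, add_zero] at hr0
      have hx2 : (x.2 : V) = 0 := by
        have : i (p x.1) = 0 := by rw [hr0, map_zero]
        rw [this, zero_add] at hx
        exact hx
      have : x.1 ∈ range ιQ := by rw [hexq]; exact hr0
      obtain ⟨q, hq⟩ := this
      refine ⟨q, ?_⟩
      have h1 : (ι'' q).1 = x.1 := by simpa [hι''] using hq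
      have h2 : (ι'' q).2 = x.2 := by
        simp only [hι'', LinearMap.prod_apply, Function.prod, LinearMap.zero_apply]
        exact (Subtype.ext hx2).symm
      exact Prod.ext_iff.mpr ⟨h1, h2⟩
  obtain ⟨r'', hr''⟩ := hV Q (Y × K) projQ ι'' p'' hinj'' hsurj'' hex''
  refine ⟨r''.comp (LinearMap.inl S Y K), ?_⟩
  ext q
  have := congrArg (fun t => t q) hr''
  simp only [LinearMap.comp_apply, LinearMap.id_apply] at this ⊢
  rw [show (LinearMap.inl S Y K) (ιQ q) = ι'' q from rfl]
  exact this

end EV2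

end GPAux
namespace GPAux

variable {S : Type u} [Ring S]

open Function Submodule LinearMap

/-- A "ladder": a doubly infinite chain of short exact sequences
`0 → Z i → Pm i → Z (i+1) → 0` with projective middles and `Ext¹(Z i, proj) = 0`. -/
structure Ladder (S : Type u) [Ring S] : Type (u + 1) where
  Z : ℤ → Type u
  Pm : ℤ → Type u
  [zacg : ∀ i, AddCommGroup (Z i)]
  [zmod : ∀ i, Module S (Z i)]
  [pacg : ∀ i, AddCommGroup (Pm i)]
  [pmod : ∀ i, Module S (Pm i)]
  proj : ∀ i, Module.Projective S (Pm i)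
  emb : ∀ i, Z i →ₗ[S] Pm i
  quo : ∀ i, Pm i →ₗ[S] Z (i + 1)
  emb_inj : ∀ i, Function.Injective (emb i)
  quo_surj : ∀ i, Function.Surjective (quo i)
  ex : ∀ i, LinearMap.range (emb i) = LinearMap.ker (quo i)
  ev : ∀ i, ExtVanish S (Z i)

attribute [instance] Ladder.zacg Ladder.zmod Ladder.pacg Ladder.pmod

/-- Gorenstein projectivity, reformulated: `G` is a level of some ladder. -/
def IsGP (S : Type u) [Ring S] (G : Type u) [AddCommGroup G] [Module S G] : Prop :=
  ∃ (L : Ladder S) (k : ℤ), Nonempty (G ≃ₗ[S] L.Z k)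

section LadderBasic

variable {G G' Q Y N M : Type u}
variable [AddCommGroup G] [Module S G] [AddCommGroup G'] [Module S G']
variable [AddCommGroup Q] [Module S Q] [AddCommGroup Y] [Module S Y]
variable [AddCommGroup N] [Module S N] [AddCommGroup M] [Module S M]

theorem ker_equiv_comp {W : Type u} [AddCommGroup W] [Module S W] (e : N ≃ₗ[S] W)
    (f : Y →ₗ[S] N) : ker (e.toLinearMap.comp f) = ker f := by
  ext y; simp [LinearMap.mem_ker]

/-- Shift a ladder by a constant. -/
noncomputable def Ladder.trans (L : Ladder S) (c : ℤ) : Ladder S where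
  Z i := L.Z (i + c)
  Pm i := L.Pm (i + c)
  proj i := L.proj (i + c)
  emb i := L.emb (i + c)
  quo i := (famCast (Z := L.Z) (show i + c + 1 = i + 1 + c by ring)).toLinearMap.comp
    (L.quo (i + c))
  emb_inj i := L.emb_inj (i + c)
  quo_surj i := (famCast (Z := L.Z) (show i + c + 1 = i + 1 + c by ring)).surjective.comp
    (L.quo_surj (i + c))
  ex i := by rw [ker_equiv_comp]; exact L.ex (i + c)
  ev i := L.ev (i + c)

theorem IsGP.norm (h : IsGP S G) (k : ℤ) : ∃ L : Ladder S, Nonempty (G ≃ₗ[S] L.Z k) := by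
  obtain ⟨L, k₀, ⟨e⟩⟩ := h
  exact ⟨L.trans (k₀ - k), ⟨e.trans (famCast (Z := L.Z) (show k₀ = k + (k₀ - k) by ring))⟩⟩

theorem IsGP.of_equiv (h : IsGP S G) (e : G ≃ₗ[S] G') : IsGP S G' := by
  obtain ⟨L, k, ⟨e'⟩⟩ := h
  exact ⟨L, k, ⟨e.symm.trans e'⟩⟩

theorem Ladder.isGP (L : Ladder S) (k : ℤ) : IsGP S (L.Z k) := ⟨L, k, ⟨LinearEquiv.refl _ _⟩⟩

theorem IsGP.extVanish (h : IsGP S G) : ExtVanish S G := by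
  obtain ⟨L, k, ⟨e⟩⟩ := h
  exact extVanish_of_equiv e.symm (L.ev k)

theorem range_inl_eq_ker_snd (A B : Type u) [AddCommGroup A] [Module S A] [AddCommGroup B]
    [Module S B] : range (LinearMap.inl S A B) = ker (LinearMap.snd S A B) := by
  ext x
  constructor
  · rintro ⟨a, rfl⟩; rfl
  · intro hx
    exact ⟨x.1, by rw [LinearMap.inl_apply]; exact Prod.ext_iff.mpr ⟨rfl, (hx : x.2 = 0).symm⟩⟩

/-- The ladder witnessing that a projective module is Gorenstein projective. -/
noncomputable def projLadder (Q : Type u) [AddCommGroup Q] [Module S Q]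
    (projQ : Module.Projective S Q) : Ladder S where
  Z _ := Q
  Pm _ := Q × Q
  proj i := by haveI := projQ; infer_instance
  emb _ := LinearMap.inl S Q Q
  quo _ := LinearMap.snd S Q Q
  emb_inj _ := LinearMap.inl_injective
  quo_surj _ := fun q => ⟨(0, q), rfl⟩
  ex _ := range_inl_eq_ker_snd Q Q
  ev _ := extVanish_of_projective projQ

theorem IsGP.of_projective (projQ : Module.Projective S Q) : IsGP S Q :=
  ⟨projLadder Q projQ, 0, ⟨LinearEquiv.refl _ _⟩⟩

theorem IsGP.of_subsingleton [Subsingleton M] : IsGP S M := by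
  refine IsGP.of_projective (Module.projective_def'.2 ⟨0, ?_⟩)
  ext x
  exact Subsingleton.elim _ _

/-- Product of two ladders. -/
noncomputable def Ladder.prod (L₁ L₂ : Ladder S) : Ladder S where
  Z i := L₁.Z i × L₂.Z i
  Pm i := L₁.Pm i × L₂.Pm i
  proj i := by haveI := L₁.proj i; haveI := L₂.proj i; infer_instance
  emb i := (L₁.emb i).prodMap (L₂.emb i)
  quo i := (L₁.quo i).prodMap (L₂.quo i)
  emb_inj i := by
    rw [LinearMap.coe_prodMap]
    exact (L₁.emb_inj i).prodMap (L₂.emb_inj i)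
  quo_surj i := by
    rw [LinearMap.coe_prodMap]
    exact (L₁.quo_surj i).prodMap (L₂.quo_surj i)
  ex i := by
    rw [LinearMap.ker_prodMap, ← L₁.ex i, ← L₂.ex i]
    ext x
    constructor
    · rintro ⟨a, rfl⟩
      exact ⟨⟨a.1, rfl⟩, ⟨a.2, rfl⟩⟩
    · rintro ⟨⟨a, ha⟩, ⟨b, hb⟩⟩
      exact ⟨(a, b), Prod.ext_iff.mpr ⟨ha, hb⟩⟩
  ev i := extVanish_ses (LinearMap.inl S (L₁.Z i) (L₂.Z i)) (LinearMap.snd S (L₁.Z i) (L₂.Z i))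
    LinearMap.inl_injective (fun b => ⟨(0, b), rfl⟩) (range_inl_eq_ker_snd _ _)
    (L₁.ev i) (L₂.ev i)

theorem IsGP.prod {A B : Type u} [AddCommGroup A] [Module S A] [AddCommGroup B] [Module S B]
    (hA : IsGP S A) (hB : IsGP S B) : IsGP S (A × B) := by
  obtain ⟨L₁, ⟨e₁⟩⟩ := hA.norm 1
  obtain ⟨L₂, ⟨e₂⟩⟩ := hB.norm 1
  exact ⟨L₁.prod L₂, 1, ⟨e₁.prodCongr e₂⟩⟩

/-- Every Gorenstein projective admits `0 → K → P → G → 0` with `P` projective, `K` GP. -/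
theorem IsGP.exists_pres (h : IsGP S G) :
    ∃ (K P : Type u) (_ : AddCommGroup K) (_ : Module S K) (_ : AddCommGroup P)
      (_ : Module S P), Module.Projective S P ∧ IsGP S K ∧ ExtVanish S K ∧
      ∃ (ι : K →ₗ[S] P) (π : P →ₗ[S] G), Function.Injective ι ∧ Function.Surjective π ∧
        range ι = ker π := by
  obtain ⟨L, ⟨e⟩⟩ := h.norm 1
  refine ⟨L.Z 0, L.Pm 0, inferInstance, inferInstance, inferInstance, inferInstance,
    L.proj 0, L.isGP 0, L.ev 0, L.emb 0, e.symm.toLinearMap.comp (L.quo 0), L.emb_inj 0,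
    e.symm.surjective.comp (L.quo_surj 0), ?_⟩
  rw [ker_equiv_comp]
  exact L.ex 0

/-- Every Gorenstein projective embeds into a projective with GP cokernel, and maps to
projectives extend along this embedding. -/
theorem IsGP.exists_copres (h : IsGP S G) :
    ∃ (P X : Type u) (_ : AddCommGroup P) (_ : Module S P) (_ : AddCommGroup X)
      (_ : Module S X), Module.Projective S P ∧ IsGP S X ∧
      ∃ (ι : G →ₗ[S] P) (π : P →ₗ[S] X), Function.Injective ι ∧ Function.Surjective π ∧
        range ι = ker π := by
  obtain ⟨L, ⟨e⟩⟩ := h.norm 1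
  refine ⟨L.Pm 1, L.Z (1 + 1), inferInstance, inferInstance, inferInstance, inferInstance,
    L.proj 1, L.isGP (1 + 1), (L.emb 1).comp e.toLinearMap, L.quo 1,
    (L.emb_inj 1).comp e.injective, L.quo_surj 1, ?_⟩
  have : range ((L.emb 1).comp e.toLinearMap) = range (L.emb 1) := by
    rw [LinearMap.range_comp, LinearEquiv.range, Submodule.map_top]
  rw [this]
  exact L.ex 1

end LadderBasic

end GPAux
namespace GPAux

variable {S : Type u} [Ring S]

open Function Submodule LinearMap

section Interop

variable {G : Type u} [AddCommGroup G] [Module S G]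

/-- Build a ladder out of a complete projective resolution. -/
noncomputable def ladderOfCPR (c : CompleteProjectiveResolution S G) : Ladder S where
  Z i := ↥(range (c.d i))
  Pm i := c.P (i + 1)
  proj i := c.projective (i + 1)
  emb i := (range (c.d i)).subtype
  quo i := (c.d (i + 1)).rangeRestrict
  emb_inj i := Subtype.val_injective
  quo_surj i := LinearMap.surjective_rangeRestrict _
  ex i := by
    rw [Submodule.range_subtype, LinearMap.ker_rangeRestrict]
    exact c.exact i
  ev i := by
    obtain ⟨j, rfl⟩ : ∃ j, i = j + 1 + 1 := ⟨i - 1 - 1, by ring⟩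
    refine extVanish_of_pres ((range (c.d (j + 1))).subtype) ((c.d (j + 1 + 1)).rangeRestrict)
      (c.projective (j + 1 + 1)) (LinearMap.surjective_rangeRestrict _) ?_ ?_
    · rw [Submodule.range_subtype, LinearMap.ker_rangeRestrict]
      exact c.exact (j + 1)
    · intro Q' _ _ projQ' u
      have hf0 : (u.comp ((c.d (j + 1)).rangeRestrict)).comp (c.d j) = 0 := by
        ext x
        have hx : c.d (j + 1) (c.d j x) = 0 := by
          have : c.d j x ∈ ker (c.d (j + 1)) := by rw [← c.exact j]; exact ⟨x, rfl⟩
          exact this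
        have harg : (c.d (j + 1)).rangeRestrict (c.d j x) = 0 := by
          apply Subtype.ext; exact hx
        simp only [LinearMap.comp_apply, LinearMap.zero_apply, harg, map_zero]
      obtain ⟨g, hg⟩ := c.homExact Q' projQ' j (u.comp ((c.d (j + 1)).rangeRestrict)) hf0
      refine ⟨g, ?_⟩
      ext y
      obtain ⟨x, hx⟩ := y.2
      have h1 : g (c.d (j + 1) x) = u ((c.d (j + 1)).rangeRestrict x) := by
        have := congrArg (fun t => t x) hg; simpa using this
      have h2 : ((c.d (j + 1)).rangeRestrict x) = y := Subtype.ext hx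
      simp only [LinearMap.comp_apply, Submodule.subtype_apply]
      rw [← hx, h1, h2]

theorem isGP_of_isGorensteinProjective (h : IsGorensteinProjective S G) : IsGP S G := by
  obtain ⟨c⟩ := h
  obtain ⟨e⟩ := c.equiv
  exact ⟨ladderOfCPR c, 0, ⟨e⟩⟩

theorem isGorensteinProjective_of_isGP (h : IsGP S G) : IsGorensteinProjective S G := by
  obtain ⟨L, ⟨e⟩⟩ := h.norm 1
  have hrange : ∀ i : ℤ, range ((L.emb (i + 1)).comp (L.quo i)) = range (L.emb (i + 1)) := by
    intro i
    rw [LinearMap.range_comp, LinearMap.range_eq_top.2 (L.quo_surj i), Submodule.map_top]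
  have hker : ∀ i : ℤ, ker ((L.emb (i + 1)).comp (L.quo i)) = ker (L.quo i) := by
    intro i
    rw [LinearMap.ker_comp, LinearMap.ker_eq_bot.2 (L.emb_inj (i + 1))]
    rfl
  refine ⟨⟨L.Pm, fun i => L.proj i, fun i => (L.emb (i + 1)).comp (L.quo i), ?_, ?_, ?_⟩⟩
  · intro i
    rw [hrange i, hker (i + 1)]
    exact L.ex (i + 1)
  · intro Q _ _ projQ i f hf
    have hf' : ker (L.quo (i + 1)) ≤ ker f := by
      rw [← L.ex (i + 1)]
      rintro x ⟨z, rfl⟩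
      obtain ⟨y, rfl⟩ := L.quo_surj i z
      have := congrArg (fun t => t y) hf
      simpa using this
    obtain ⟨fbar, hfbar⟩ := factor_surj (L.quo (i + 1)) (L.quo_surj (i + 1)) f hf'
    obtain ⟨v, hv⟩ := extend_of_extVanish (L.emb (i + 1 + 1)) (L.quo (i + 1 + 1))
      (L.emb_inj (i + 1 + 1)) (L.quo_surj (i + 1 + 1)) (L.ex (i + 1 + 1))
      (L.ev (i + 1 + 1 + 1)) projQ fbar
    refine ⟨v, ?_⟩
    ext y
    have h1 : v (L.emb (i + 1 + 1) (L.quo (i + 1) y)) = fbar (L.quo (i + 1) y) := by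
      have := congrArg (fun t => t (L.quo (i + 1) y)) hv; simpa using this
    have h2 : fbar (L.quo (i + 1) y) = f y := by
      have := congrArg (fun t => t y) hfbar; simpa using this
    simp only [LinearMap.comp_apply]
    rw [h1, h2]
  · have hr : range ((L.emb (0 + 1)).comp (L.quo 0)) = range (L.emb (0 + 1)) := hrange 0
    exact ⟨e.trans ((LinearEquiv.ofInjective (L.emb (0 + 1)) (L.emb_inj (0 + 1))).trans
      (LinearEquiv.ofEq _ _ hr.symm))⟩

theorem isGP_iff : IsGorensteinProjective S G ↔ IsGP S G :=
  ⟨isGP_of_isGorensteinProjective, isGorensteinProjective_of_isGP⟩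

end Interop

end GPAux
namespace GPAux

variable {S : Type u} [Ring S]

open Function Submodule LinearMap

section Horseshoe

variable (LA LC : Ladder S)

/-- Level data for the horseshoe: a short exact sequence `0 → Z_A j → M → Z_C j → 0`. -/
structure ExtPack (j : ℤ) : Type (u + 1) where
  M : Type u
  [acg : AddCommGroup M]
  [mod : Module S M]
  a : LA.Z j →ₗ[S] M
  b : M →ₗ[S] LC.Z j
  ha : Function.Injective a
  hb : Function.Surjective b
  hex : range a = ker b

attribute [instance] ExtPack.acg ExtPack.mod

/-- Junction data between two modules through a middle module. -/
structure JunD (Mlow Mid Mhigh : Type u) [AddCommGroup Mlow] [Module S Mlow]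
    [AddCommGroup Mid] [Module S Mid] [AddCommGroup Mhigh] [Module S Mhigh] :
    Type u where
  ι : Mlow →ₗ[S] Mid
  π : Mid →ₗ[S] Mhigh
  hι : Function.Injective ι
  hπ : Function.Surjective π
  hexJ : range ι = ker π

/-- Output of a rightward horseshoe step. -/
structure StepROut (j : ℤ) (p : ExtPack LA LC j) : Type (u + 1) where
  next : ExtPack LA LC (j + 1)
  jun : JunD (S := S) p.M (LA.Pm j × LC.Pm j) next.M

/-- Output of a leftward horseshoe step. -/
structure StepLOut (j : ℤ) (p : ExtPack LA LC j) : Type (u + 1) where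
  prev : ExtPack LA LC (j - 1)
  jun : JunD (S := S) prev.M (LA.Pm (j - 1) × LC.Pm (j - 1)) p.M

/-- The rightward horseshoe step. -/
noncomputable def stepR (j : ℤ) (p : ExtPack LA LC j) : StepROut LA LC j p := by
  classical
  -- extend `LA.emb j` along `p.a` using `Ext¹(Z_C j, PmA j) = 0`
  have hjm := extend_of_extVanish p.a p.b p.ha p.hb p.hex (LC.ev j) (LA.proj j) (LA.emb j)
  set jm : p.M →ₗ[S] LA.Pm j := hjm.choose with hjmdef
  have hjm' : ∀ z, jm (p.a z) = LA.emb j z := by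
    intro z
    have := congrArg (fun t => t z) hjm.choose_spec
    simpa using this
  set embB : p.M →ₗ[S] LA.Pm j × LC.Pm j := jm.prod ((LC.emb j).comp p.b) with hembB
  have hembBapp : ∀ x, embB x = (jm x, LC.emb j (p.b x)) := fun x => rfl
  have hinjB : Function.Injective embB := by
    intro x y hxy
    rw [← sub_eq_zero] at hxy ⊢
    rw [← map_sub] at hxy
    set d := x - y with hd
    have h2 : LC.emb j (p.b d) = 0 := congrArg Prod.snd hxy
    have hbd : p.b d = 0 := LC.emb_inj j (by rw [h2, map_zero])
    have : d ∈ range p.a := by rw [p.hex]; exact hbd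
    obtain ⟨z, hz⟩ := this
    have h1 : jm d = 0 := congrArg Prod.fst hxy
    rw [← hz, hjm' z] at h1
    have hz0 : z = 0 := LA.emb_inj j (by rw [h1, map_zero])
    rw [← hz, hz0, map_zero]
  set Rm : Submodule S (LA.Pm j × LC.Pm j) := range embB with hRm
  -- the new top module
  have hkillα : ker (LA.quo j) ≤ ker (Rm.mkQ.comp (LinearMap.inl S (LA.Pm j) (LC.Pm j))) := by
    intro x hx
    rw [← LA.ex j] at hx
    obtain ⟨z, rfl⟩ := hx
    have : (LA.emb j z, (0 : LC.Pm j)) = embB (p.a z) := by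
      rw [hembBapp]
      have : p.b (p.a z) = 0 := pcompι_eq_zero p.a p.b p.hex z
      rw [this, map_zero, hjm' z]
    simp only [LinearMap.mem_ker, LinearMap.comp_apply, LinearMap.inl_apply, Submodule.mkQ_apply,
      Submodule.Quotient.mk_eq_zero]
    rw [this]
    exact ⟨p.a z, rfl⟩
  have hα := factor_surj (LA.quo j) (LA.quo_surj j)
    (Rm.mkQ.comp (LinearMap.inl S (LA.Pm j) (LC.Pm j))) hkillα
  set α : LA.Z (j + 1) →ₗ[S] (LA.Pm j × LC.Pm j) ⧸ Rm := hα.choose with hαdef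
  have hαapp : ∀ x, α (LA.quo j x) = Rm.mkQ (x, 0) := by
    intro x
    have := congrArg (fun t => t x) hα.choose_spec
    simpa using this
  have hkillβ : ∀ x ∈ Rm, ((LC.quo j).comp (LinearMap.snd S (LA.Pm j) (LC.Pm j))) x = 0 := by
    rintro x ⟨m, rfl⟩
    rw [hembBapp]
    exact pcompι_eq_zero (LC.emb j) (LC.quo j) (LC.ex j) (p.b m)
  set β : (LA.Pm j × LC.Pm j) ⧸ Rm →ₗ[S] LC.Z (j + 1) :=
    Rm.liftQ ((LC.quo j).comp (LinearMap.snd S (LA.Pm j) (LC.Pm j))) hkillβ with hβdef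
  have hβapp : ∀ x : LA.Pm j × LC.Pm j, β (Rm.mkQ x) = LC.quo j x.2 := fun x => rfl
  have hαinj : Function.Injective α := by
    intro z z' hzz
    rw [← sub_eq_zero] at hzz ⊢
    rw [← map_sub] at hzz
    obtain ⟨x, hx⟩ := LA.quo_surj j (z - z')
    rw [← hx, hαapp, Submodule.mkQ_apply, Submodule.Quotient.mk_eq_zero] at hzz
    obtain ⟨m, hm⟩ := hzz
    have hm2 : LC.emb j (p.b m) = 0 := by
      have := congrArg Prod.snd hm
      rw [hembBapp] at this
      exact this
    have hbm : p.b m = 0 := LC.emb_inj j (by rw [hm2, map_zero])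
    have : m ∈ range p.a := by rw [p.hex]; exact hbm
    obtain ⟨z₀, rfl⟩ := this
    have hm1 : LA.emb j z₀ = x := by
      have := congrArg Prod.fst hm
      rw [hembBapp, hjm' z₀] at this
      exact this
    rw [← hx, ← hm1]
    exact pcompι_eq_zero (LA.emb j) (LA.quo j) (LA.ex j) z₀
  have hβsurj : Function.Surjective β := by
    intro w
    obtain ⟨qc, rfl⟩ := LC.quo_surj j w
    exact ⟨Rm.mkQ (0, qc), hβapp _⟩
  have hexαβ : range α = ker β := by
    ext x
    constructor
    · rintro ⟨z, rfl⟩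
      obtain ⟨pa, rfl⟩ := LA.quo_surj j z
      rw [LinearMap.mem_ker, hαapp, hβapp]
      exact map_zero _
    · intro hx
      obtain ⟨⟨pa, qc⟩, rfl⟩ := Rm.mkQ_surjective x
      have hqc : LC.quo j qc = 0 := hx
      have : qc ∈ range (LC.emb j) := by rw [LC.ex j]; exact hqc
      obtain ⟨w, hw⟩ := this
      obtain ⟨m, rfl⟩ := p.hb w
      refine ⟨LA.quo j (pa - jm m), ?_⟩
      rw [hαapp]
      rw [Submodule.mkQ_apply, Submodule.mkQ_apply, Submodule.Quotient.eq]
      refine ⟨-m, ?_⟩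
      rw [hembBapp, map_neg]
      have : (pa - jm m, (0 : LC.Pm j)) - (pa, qc) = (-(jm m), -qc) := by
        rw [Prod.ext_iff]
        constructor
        · simp
        · simp
      rw [this, ← hw, map_neg, map_neg]
  exact
    { next :=
        { M := (LA.Pm j × LC.Pm j) ⧸ Rm
          a := α
          b := β
          ha := hαinj
          hb := hβsurj
          hex := hexαβ }
      jun :=
        { ι := embB
          π := Rm.mkQ
          hι := hinjB
          hπ := Rm.mkQ_surjective
          hexJ := (Submodule.ker_mkQ Rm).symm } }

end Horseshoe

end GPAux
namespace GPAux

variable {S : Type u} [Ring S]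

open Function Submodule LinearMap

section Horseshoe2

variable (LA LC : Ladder S)

/-- The leftward horseshoe step. -/
noncomputable def stepL (j : ℤ) (p : ExtPack LA LC j) : StepLOut LA LC j p := by
  classical
  set πA : LA.Pm (j - 1) →ₗ[S] LA.Z j :=
    (famCast (Z := LA.Z) (show j - 1 + 1 = j by ring)).toLinearMap.comp (LA.quo (j - 1))
    with hπA
  set πC : LC.Pm (j - 1) →ₗ[S] LC.Z j :=
    (famCast (Z := LC.Z) (show j - 1 + 1 = j by ring)).toLinearMap.comp (LC.quo (j - 1))
    with hπC
  have hπAsurj : Surjective πA :=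
    (famCast (Z := LA.Z) (show j - 1 + 1 = j by ring)).surjective.comp (LA.quo_surj (j - 1))
  have hπCsurj : Surjective πC :=
    (famCast (Z := LC.Z) (show j - 1 + 1 = j by ring)).surjective.comp (LC.quo_surj (j - 1))
  have hπAker : range (LA.emb (j - 1)) = ker πA := by
    rw [hπA, ker_equiv_comp]; exact LA.ex (j - 1)
  have hπCker : range (LC.emb (j - 1)) = ker πC := by
    rw [hπC, ker_equiv_comp]; exact LC.ex (j - 1)
  haveI := LC.proj (j - 1)
  have hℓ := Module.projective_lifting_property p.b πC p.hb
  set ℓ : LC.Pm (j - 1) →ₗ[S] p.M := hℓ.choose with hℓdef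
  have hℓ' : ∀ q, p.b (ℓ q) = πC q := by
    intro q
    have := congrArg (fun t => t q) hℓ.choose_spec
    simpa using this
  set σ : LA.Pm (j - 1) × LC.Pm (j - 1) →ₗ[S] p.M :=
    (p.a.comp (πA.comp (LinearMap.fst S (LA.Pm (j - 1)) (LC.Pm (j - 1))))) +
      (ℓ.comp (LinearMap.snd S (LA.Pm (j - 1)) (LC.Pm (j - 1)))) with hσ
  have hσapp : ∀ x : LA.Pm (j - 1) × LC.Pm (j - 1), σ x = p.a (πA x.1) + ℓ x.2 :=
    fun x => rfl
  have hσsurj : Surjective σ := by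
    intro m
    obtain ⟨qc, hqc⟩ := hπCsurj (p.b m)
    have : m - ℓ qc ∈ range p.a := by
      rw [p.hex, LinearMap.mem_ker, map_sub, hℓ' qc, hqc, sub_self]
    obtain ⟨z, hz⟩ := this
    obtain ⟨pa, hpa⟩ := hπAsurj z
    refine ⟨(pa, qc), ?_⟩
    rw [hσapp, hpa, hz]
    abel
  -- the new bottom module
  set Km : Submodule S (LA.Pm (j - 1) × LC.Pm (j - 1)) := ker σ with hKm
  have hamem : ∀ z : LA.Z (j - 1), ((LA.emb (j - 1)) z, (0 : LC.Pm (j - 1))) ∈ Km := by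
    intro z
    rw [hKm, LinearMap.mem_ker, hσapp]
    have h1 : πA (LA.emb (j - 1) z) = 0 := pcompι_eq_zero (LA.emb (j - 1)) πA hπAker z
    rw [h1]
    simp
  set a' : LA.Z (j - 1) →ₗ[S] Km :=
    ((LinearMap.inl S (LA.Pm (j - 1)) (LC.Pm (j - 1))).comp
      (LA.emb (j - 1))).codRestrict Km hamem with ha'
  have ha'app : ∀ z, ((a' z : LA.Pm (j - 1) × LC.Pm (j - 1))) = (LA.emb (j - 1) z, 0) :=
    fun z => rfl
  have hbmem : ∀ x : Km, ((x : LA.Pm (j - 1) × LC.Pm (j - 1)).2) ∈ range (LC.emb (j - 1)) := by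
    intro x
    rw [hπCker, LinearMap.mem_ker]
    have hx : σ (x : LA.Pm (j - 1) × LC.Pm (j - 1)) = 0 := x.2
    rw [hσapp] at hx
    have := congrArg p.b hx
    rw [map_add, map_zero, pcompι_eq_zero p.a p.b p.hex, hℓ', zero_add] at this
    exact this
  set b' : Km →ₗ[S] LC.Z (j - 1) :=
    (LinearEquiv.ofInjective (LC.emb (j - 1)) (LC.emb_inj (j - 1))).symm.toLinearMap.comp
      (((LinearMap.snd S (LA.Pm (j - 1)) (LC.Pm (j - 1))).comp Km.subtype).codRestrict
        (range (LC.emb (j - 1))) hbmem) with hb'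
  have hb'app : ∀ x : Km, LC.emb (j - 1) (b' x) = (x : LA.Pm (j - 1) × LC.Pm (j - 1)).2 := by
    intro x
    rw [hb']
    simp only [LinearMap.comp_apply, LinearEquiv.coe_coe]
    rw [LinearEquiv.ofInjective_symm_apply]
    rfl
  have ha'inj : Injective a' := by
    intro z z' hzz
    have h0 : (a' z : LA.Pm (j - 1) × LC.Pm (j - 1)) = (a' z' : _) := Subtype.ext_iff.mp hzz
    rw [ha'app, ha'app] at h0
    exact LA.emb_inj (j - 1) (congrArg Prod.fst h0)
  have hb'surj : Surjective b' := by
    intro w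
    have h1 : p.b (ℓ (LC.emb (j - 1) w)) = 0 := by
      rw [hℓ', pcompι_eq_zero (LC.emb (j - 1)) πC hπCker]
    have : ℓ (LC.emb (j - 1) w) ∈ range p.a := by rw [p.hex]; exact h1
    obtain ⟨z, hz⟩ := this
    obtain ⟨pa, hpa⟩ := hπAsurj z
    have hmem : ((-pa, LC.emb (j - 1) w) : LA.Pm (j - 1) × LC.Pm (j - 1)) ∈ Km := by
      rw [hKm, LinearMap.mem_ker, hσapp]
      simp only [map_neg, hpa, hz]
      abel
    refine ⟨⟨(-pa, LC.emb (j - 1) w), hmem⟩, ?_⟩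
    apply LC.emb_inj (j - 1)
    rw [hb'app]
  have hexab : range a' = ker b' := by
    ext x
    constructor
    · rintro ⟨z, rfl⟩
      have : LC.emb (j - 1) (b' (a' z)) = 0 := by rw [hb'app, ha'app]
      exact LC.emb_inj (j - 1) (by rw [this, map_zero])
    · intro hx
      have hx' : b' x = 0 := hx
      have hx2 : (x : LA.Pm (j - 1) × LC.Pm (j - 1)).2 = 0 := by
        rw [← hb'app, hx', map_zero]
      have hσx : σ (x : LA.Pm (j - 1) × LC.Pm (j - 1)) = 0 := x.2
      rw [hσapp, hx2, map_zero, add_zero] at hσx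
      have hπA1 : πA (x : LA.Pm (j - 1) × LC.Pm (j - 1)).1 = 0 :=
        p.ha (by rw [hσx, map_zero])
      have : (x : LA.Pm (j - 1) × LC.Pm (j - 1)).1 ∈ range (LA.emb (j - 1)) := by
        rw [hπAker]; exact hπA1
      obtain ⟨z, hz⟩ := this
      refine ⟨z, ?_⟩
      apply Subtype.ext
      rw [ha'app]
      exact Prod.ext_iff.mpr ⟨hz, hx2.symm⟩
  exact
    { prev :=
        { M := Km
          a := a'
          b := b'
          ha := ha'inj
          hb := hb'surj
          hex := hexab }
      jun :=
        { ι := Km.subtype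
          π := σ
          hι := Subtype.val_injective
          hπ := hσsurj
          hexJ := Submodule.range_subtype Km } }

end Horseshoe2

end GPAux
namespace GPAux

variable {S : Type u} [Ring S]

open Function Submodule LinearMap

section Assemble

variable (LA LC : Ladder S)
variable {A B C : Type u} [AddCommGroup A] [Module S A] [AddCommGroup B] [Module S B]
variable [AddCommGroup C] [Module S C]

/-- The base pack at level 1, from a short exact sequence `0 → A → B → C → 0`. -/
noncomputable def basePack (f : A →ₗ[S] B) (g : B →ₗ[S] C) (hf : Function.Injective f)
    (hg : Function.Surjective g) (hfg : range f = ker g)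
    (eA : A ≃ₗ[S] LA.Z 1) (eC : C ≃ₗ[S] LC.Z 1) : ExtPack LA LC 1 where
  M := B
  a := f.comp eA.symm.toLinearMap
  b := eC.toLinearMap.comp g
  ha := hf.comp eA.symm.injective
  hb := eC.surjective.comp hg
  hex := by
    rw [LinearMap.range_comp, LinearEquiv.range, Submodule.map_top, ker_equiv_comp]
    exact hfg

variable (base : ExtPack LA LC 1)

/-- Rightward tower of packs: `Rseq n` sits at level `n + 1`. -/
noncomputable def Rseq : (n : ℕ) → ExtPack LA LC (Int.ofNat (n + 1))
  | 0 => base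
  | (n + 1) => (stepR LA LC (Int.ofNat (n + 1)) (Rseq n)).next

/-- The pack at level `0`. -/
noncomputable def pZero : ExtPack LA LC (Int.ofNat 0) := (stepL LA LC 1 base).prev

/-- Leftward tower of packs: `LBseq n` sits at level `-(n+1)`. -/
noncomputable def LBseq : (n : ℕ) → ExtPack LA LC (Int.negSucc n)
  | 0 => (stepL LA LC (Int.ofNat 0) (pZero LA LC base)).prev
  | (n + 1) => (stepL LA LC (Int.negSucc n) (LBseq n)).prev

/-- All packs, indexed by `ℤ`. -/
noncomputable def corePack : (i : ℤ) → ExtPack LA LC i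
  | .ofNat 0 => pZero LA LC base
  | .ofNat (n + 1) => Rseq LA LC base n
  | .negSucc n => LBseq LA LC base n

/-- The junctions between consecutive packs. -/
noncomputable def juncPack : (i : ℤ) →
    JunD (S := S) (corePack LA LC base i).M (LA.Pm i × LC.Pm i)
      (corePack LA LC base (i + 1)).M
  | .ofNat 0 => (stepL LA LC 1 base).jun
  | .ofNat (n + 1) => (stepR LA LC (Int.ofNat (n + 1)) (Rseq LA LC base n)).jun
  | .negSucc 0 => (stepL LA LC (Int.ofNat 0) (pZero LA LC base)).jun
  | .negSucc (n + 1) => (stepL LA LC (Int.negSucc n) (LBseq LA LC base n)).jun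

/-- The ladder for the middle term of an extension. -/
noncomputable def extLadder : Ladder S where
  Z i := (corePack LA LC base i).M
  Pm i := LA.Pm i × LC.Pm i
  proj i := by haveI := LA.proj i; haveI := LC.proj i; infer_instance
  emb i := (juncPack LA LC base i).ι
  quo i := (juncPack LA LC base i).π
  emb_inj i := (juncPack LA LC base i).hι
  quo_surj i := (juncPack LA LC base i).hπ
  ex i := (juncPack LA LC base i).hexJ
  ev i := extVanish_ses (corePack LA LC base i).a (corePack LA LC base i).b
    (corePack LA LC base i).ha (corePack LA LC base i).hb (corePack LA LC base i).hex
    (LA.ev i) (LC.ev i)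

/-- Gorenstein projectives are closed under extensions. -/
theorem IsGP.ext_closure (f : A →ₗ[S] B) (g : B →ₗ[S] C) (hf : Function.Injective f)
    (hg : Function.Surjective g) (hfg : range f = ker g) (hA : IsGP S A) (hC : IsGP S C) :
    IsGP S B := by
  obtain ⟨LA', ⟨eA⟩⟩ := hA.norm 1
  obtain ⟨LC', ⟨eC⟩⟩ := hC.norm 1
  refine ⟨extLadder LA' LC' (basePack LA' LC' f g hf hg hfg eA eC), 1, ⟨?_⟩⟩
  exact LinearEquiv.refl S B

end Assemble

end GPAux
namespace GPAux

variable {S : Type u} [Ring S]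

open Function Submodule LinearMap

section Splice

variable (s t : Ladder S)
variable (A T P₁ : Type u) [AddCommGroup A] [Module S A] [AddCommGroup T] [Module S T]
variable [AddCommGroup P₁] [Module S P₁]

/-- Levels of the spliced ladder. -/
noncomputable def spZ : ℤ → Type u
  | .ofNat 0 => s.Z 0
  | .ofNat 1 => A
  | .ofNat (n + 2) => t.Z (Int.ofNat (n + 2))
  | .negSucc n => s.Z (Int.negSucc n)

/-- Middles of the spliced ladder. -/
noncomputable def spPm : ℤ → Type u
  | .ofNat 0 => T
  | .ofNat 1 => P₁
  | .ofNat (n + 2) => t.Pm (Int.ofNat (n + 2))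
  | .negSucc n => s.Pm (Int.negSucc n)

noncomputable def spZacg : ∀ i, AddCommGroup (spZ s t A i)
  | .ofNat 0 => inferInstanceAs (AddCommGroup (s.Z 0))
  | .ofNat 1 => inferInstanceAs (AddCommGroup A)
  | .ofNat (n + 2) => inferInstanceAs (AddCommGroup (t.Z (Int.ofNat (n + 2))))
  | .negSucc n => inferInstanceAs (AddCommGroup (s.Z (Int.negSucc n)))

noncomputable def spZmod : ∀ i, @Module S (spZ s t A i) _ (spZacg s t A i).toAddCommMonoid
  | .ofNat 0 => inferInstanceAs (Module S (s.Z 0))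
  | .ofNat 1 => inferInstanceAs (Module S A)
  | .ofNat (n + 2) => inferInstanceAs (Module S (t.Z (Int.ofNat (n + 2))))
  | .negSucc n => inferInstanceAs (Module S (s.Z (Int.negSucc n)))

noncomputable def spPacg : ∀ i, AddCommGroup (spPm s t T P₁ i)
  | .ofNat 0 => inferInstanceAs (AddCommGroup T)
  | .ofNat 1 => inferInstanceAs (AddCommGroup P₁)
  | .ofNat (n + 2) => inferInstanceAs (AddCommGroup (t.Pm (Int.ofNat (n + 2))))
  | .negSucc n => inferInstanceAs (AddCommGroup (s.Pm (Int.negSucc n)))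

noncomputable def spPmod : ∀ i, @Module S (spPm s t T P₁ i) _ (spPacg s t T P₁ i).toAddCommMonoid
  | .ofNat 0 => inferInstanceAs (Module S T)
  | .ofNat 1 => inferInstanceAs (Module S P₁)
  | .ofNat (n + 2) => inferInstanceAs (Module S (t.Pm (Int.ofNat (n + 2))))
  | .negSucc n => inferInstanceAs (Module S (s.Pm (Int.negSucc n)))

/-- Splicing: the bottom of `s`, then `A`, then the top of `t`, yields a ladder. -/
noncomputable def spliceLadder (hT : Module.Projective S T) (hP₁ : Module.Projective S P₁)
    (ι₀ : s.Z 0 →ₗ[S] T) (π₀ : T →ₗ[S] A) (hι₀ : Function.Injective ι₀)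
    (hπ₀ : Function.Surjective π₀) (hex₀ : range ι₀ = ker π₀)
    (ι₁ : A →ₗ[S] P₁) (π₁ : P₁ →ₗ[S] t.Z 2) (hι₁ : Function.Injective ι₁)
    (hπ₁ : Function.Surjective π₁) (hex₁ : range ι₁ = ker π₁)
    (hEV : ExtVanish S A) : Ladder S where
  Z := spZ s t A
  Pm := spPm s t T P₁
  zacg := spZacg s t A
  zmod := spZmod s t A
  pacg := spPacg s t T P₁
  pmod := spPmod s t T P₁
  proj i := match i with
    | .ofNat 0 => hT
    | .ofNat 1 => hP₁
    | .ofNat (n + 2) => t.proj (Int.ofNat (n + 2))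
    | .negSucc n => s.proj (Int.negSucc n)
  emb i := match i with
    | .ofNat 0 => ι₀
    | .ofNat 1 => ι₁
    | .ofNat (n + 2) => t.emb (Int.ofNat (n + 2))
    | .negSucc n => s.emb (Int.negSucc n)
  quo i := match i with
    | .ofNat 0 => π₀
    | .ofNat 1 => π₁
    | .ofNat (n + 2) => t.quo (Int.ofNat (n + 2))
    | .negSucc 0 => s.quo (Int.negSucc 0)
    | .negSucc (n + 1) => s.quo (Int.negSucc (n + 1))
  emb_inj i := match i with
    | .ofNat 0 => hι₀
    | .ofNat 1 => hι₁
    | .ofNat (n + 2) => t.emb_inj (Int.ofNat (n + 2))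
    | .negSucc n => s.emb_inj (Int.negSucc n)
  quo_surj i := match i with
    | .ofNat 0 => hπ₀
    | .ofNat 1 => hπ₁
    | .ofNat (n + 2) => t.quo_surj (Int.ofNat (n + 2))
    | .negSucc 0 => s.quo_surj (Int.negSucc 0)
    | .negSucc (n + 1) => s.quo_surj (Int.negSucc (n + 1))
  ex i := match i with
    | .ofNat 0 => hex₀
    | .ofNat 1 => hex₁
    | .ofNat (n + 2) => t.ex (Int.ofNat (n + 2))
    | .negSucc 0 => s.ex (Int.negSucc 0)
    | .negSucc (n + 1) => s.ex (Int.negSucc (n + 1))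
  ev i := match i with
    | .ofNat 0 => s.ev 0
    | .ofNat 1 => hEV
    | .ofNat (n + 2) => t.ev (Int.ofNat (n + 2))
    | .negSucc n => s.ev (Int.negSucc n)

end Splice

end GPAux
namespace GPAux

variable {S : Type u} [Ring S]

open Function Submodule LinearMap

section OfProd

variable {A P : Type u} [AddCommGroup A] [Module S A] [AddCommGroup P] [Module S P]

/-- A direct summand of a Gorenstein projective with projective complement is
Gorenstein projective. -/
theorem IsGP.of_prod (hAP : IsGP S (A × P)) (hP : Module.Projective S P) : IsGP S A := by
  classical
  obtain ⟨s, ⟨e⟩⟩ := hAP.norm 1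
  set eInl : A →ₗ[S] s.Z 1 := e.toLinearMap.comp (LinearMap.inl S A P) with heInl
  have heInl_inj : Injective eInl := e.injective.comp LinearMap.inl_injective
  set A' : Submodule S (s.Z 1) := range eInl with hA'
  -- the preimage T of A inside `s.Pm 0`
  set Tm : Submodule S (s.Pm 0) := comap (s.quo 0) A' with hTm
  have hmemT : ∀ x : s.Pm 0, x ∈ Tm ↔ s.quo 0 x ∈ A' := fun _ => Iff.rfl
  have hι₀mem : ∀ z : s.Z 0, s.emb 0 z ∈ Tm := by
    intro z
    rw [hmemT, pcompι_eq_zero (s.emb 0) (s.quo 0) (s.ex 0) z]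
    exact zero_mem _
  set ι₀ : s.Z 0 →ₗ[S] Tm := (s.emb 0).codRestrict Tm hι₀mem with hι₀
  have hι₀inj : Injective ι₀ := by
    intro z z' h
    exact s.emb_inj 0 (congrArg Subtype.val h)
  have hquomem : ∀ x : Tm, ((s.quo 0).comp Tm.subtype) x ∈ A' := fun x => x.2
  set π₀ : Tm →ₗ[S] A :=
    (LinearEquiv.ofInjective eInl heInl_inj).symm.toLinearMap.comp
      (((s.quo 0).comp Tm.subtype).codRestrict A' hquomem) with hπ₀def
  have hπ₀app : ∀ x : Tm, eInl (π₀ x) = s.quo 0 (x : s.Pm 0) := by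
    intro x
    rw [hπ₀def]
    simp only [LinearMap.comp_apply, LinearEquiv.coe_coe]
    rw [LinearEquiv.ofInjective_symm_apply]
    rfl
  have hπ₀surj : Surjective π₀ := by
    intro a
    obtain ⟨x, hx⟩ := s.quo_surj 0 (eInl a)
    have hxT : x ∈ Tm := by rw [hmemT, hx]; exact ⟨a, rfl⟩
    exact ⟨⟨x, hxT⟩, heInl_inj (by rw [hπ₀app]; exact hx)⟩
  have hex₀ : range ι₀ = ker π₀ := by
    ext x
    constructor
    · rintro ⟨z, rfl⟩
      have : eInl (π₀ (ι₀ z)) = 0 := by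
        rw [hπ₀app]
        exact pcompι_eq_zero (s.emb 0) (s.quo 0) (s.ex 0) z
      exact heInl_inj (by rw [this, map_zero])
    · intro hx
      have hx' : π₀ x = 0 := hx
      have h0 : s.quo 0 (x : s.Pm 0) = 0 := by rw [← hπ₀app, hx', map_zero]
      have : (x : s.Pm 0) ∈ range (s.emb 0) := by rw [s.ex 0]; exact h0
      obtain ⟨z, hz⟩ := this
      exact ⟨z, Subtype.ext hz⟩
  -- T is projective
  set q : s.Pm 0 →ₗ[S] P :=
    (LinearMap.snd S A P).comp (e.symm.toLinearMap.comp (s.quo 0)) with hq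
  have hkerq : ker q = Tm := by
    ext x
    simp only [LinearMap.mem_ker, hq, LinearMap.comp_apply, LinearEquiv.coe_coe]
    rw [hmemT, hA']
    constructor
    · intro h
      refine ⟨(e.symm (s.quo 0 x)).1, ?_⟩
      rw [heInl]
      simp only [LinearMap.comp_apply, LinearEquiv.coe_coe, LinearMap.inl_apply]
      rw [show ((e.symm (s.quo 0 x)).1, (0 : P)) = e.symm (s.quo 0 x) from
        Prod.ext_iff.mpr ⟨rfl, h.symm⟩]
      exact e.apply_symm_apply _
    · rintro ⟨a, ha⟩
      have h2 := congrArg (fun z => (e.symm z).2) ha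
      simp only [heInl, LinearMap.comp_apply, LinearEquiv.coe_coe, LinearMap.inl_apply,
        LinearEquiv.symm_apply_apply] at h2
      exact h2.symm
  have hqsurj : Surjective q := by
    intro pp
    obtain ⟨x, hx⟩ := s.quo_surj 0 (e (0, pp))
    refine ⟨x, ?_⟩
    have h2 := congrArg (fun z => (e.symm z).2) hx
    simp only [LinearEquiv.symm_apply_apply] at h2
    exact h2
  haveI := hP
  obtain ⟨σP, hσP⟩ := Module.projective_lifting_property q LinearMap.id hqsurj
  have hρmem : ∀ x : s.Pm 0, x - σP (q x) ∈ Tm := by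
    intro x
    rw [← hkerq, LinearMap.mem_ker, map_sub]
    have : q (σP (q x)) = q x := by
      have := congrArg (fun t => t (q x)) hσP; simpa using this
    rw [this, sub_self]
  set ρ : s.Pm 0 →ₗ[S] Tm :=
    ((LinearMap.id : s.Pm 0 →ₗ[S] s.Pm 0) - σP.comp q).codRestrict Tm hρmem with hρ
  have hρT : ρ.comp Tm.subtype = LinearMap.id := by
    ext x
    have hx0 : q (x : s.Pm 0) = 0 := by
      have hmem : (x : s.Pm 0) ∈ ker q := by rw [hkerq]; exact x.2
      exact hmem
    simp only [LinearMap.comp_apply, LinearMap.id_apply, hρ, LinearMap.codRestrict_apply,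
      Submodule.subtype_apply, LinearMap.sub_apply, hx0, map_zero, sub_zero]
  have hTproj : Module.Projective S Tm := by
    haveI := s.proj 0
    exact Module.Projective.of_split Tm.subtype ρ hρT
  -- the cokernel X of A inside `s.Pm 1`
  set ιA1 : A →ₗ[S] s.Pm 1 := (s.emb 1).comp eInl with hιA1
  have hιA1inj : Injective ιA1 := (s.emb_inj 1).comp heInl_inj
  set Rm : Submodule S (s.Pm 1) := range ιA1 with hRm
  set X := (s.Pm 1) ⧸ Rm with hX
  set π₁ : s.Pm 1 →ₗ[S] X := Rm.mkQ with hπ₁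
  set jP : P →ₗ[S] X := Rm.mkQ.comp ((s.emb 1).comp (e.toLinearMap.comp (LinearMap.inr S A P)))
    with hjP
  have hkillX : ∀ x ∈ Rm, s.quo 1 x = 0 := by
    rintro x ⟨a, rfl⟩
    exact pcompι_eq_zero (s.emb 1) (s.quo 1) (s.ex 1) (eInl a)
  set qX : X →ₗ[S] s.Z (1 + 1) := Rm.liftQ (s.quo 1) hkillX with hqX
  have hjPinj : Injective jP := by
    intro p p' hpp
    rw [← sub_eq_zero] at hpp ⊢
    rw [← map_sub] at hpp
    set d := p - p' with hd
    have hjd : jP d = Rm.mkQ ((s.emb 1) (e ((0 : A), d))) := rfl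
    rw [hjd, Submodule.mkQ_apply, Submodule.Quotient.mk_eq_zero] at hpp
    obtain ⟨a, ha⟩ := hpp
    have ha' : (s.emb 1) (e (a, (0 : P))) = (s.emb 1) (e ((0 : A), d)) := ha
    have h2 : e (a, (0 : P)) = e ((0 : A), d) := s.emb_inj 1 ha'
    have h3 : ((a, (0:P)) : A × P) = (0, d) := e.injective h2
    exact (congrArg Prod.snd h3).symm
  have hqXsurj : Surjective qX := by
    intro z
    obtain ⟨x, hx⟩ := s.quo_surj 1 z
    exact ⟨Rm.mkQ x, by rw [hqX]; exact hx⟩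
  have hexX : range jP = ker qX := by
    ext x
    constructor
    · rintro ⟨p, rfl⟩
      rw [LinearMap.mem_ker, hjP]
      simp only [LinearMap.comp_apply, LinearEquiv.coe_coe, Submodule.mkQ_apply]
      rw [hqX]
      exact pcompι_eq_zero (s.emb 1) (s.quo 1) (s.ex 1) _
    · intro hx
      obtain ⟨y, rfl⟩ := Rm.mkQ_surjective x
      have hy : s.quo 1 y = 0 := hx
      have : y ∈ range (s.emb 1) := by rw [s.ex 1]; exact hy
      obtain ⟨v, hv⟩ := this
      refine ⟨(e.symm v).2, ?_⟩
      have hjv : jP ((e.symm v).2) = Rm.mkQ ((s.emb 1) (e ((0 : A), (e.symm v).2))) := rfl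
      rw [hjv, Submodule.mkQ_apply, Submodule.mkQ_apply, Submodule.Quotient.eq]
      have hkey : (s.emb 1) (e ((0 : A), (e.symm v).2)) - y = ιA1 (-(e.symm v).1) := by
        rw [← hv]
        have h4 : e ((0 : A), (e.symm v).2) - v = e ((-(e.symm v).1, (0 : P))) := by
          conv_lhs => rw [show v = e (e.symm v) from (e.apply_symm_apply v).symm]
          rw [← map_sub]
          congr 1
          rw [Prod.ext_iff]
          exact ⟨by simp, by simp⟩
        rw [← map_sub, h4]
        rfl
      rw [hkey]
      exact LinearMap.mem_range_self _ _
  have hXgp : IsGP S X := IsGP.ext_closure jP qX hjPinj hqXsurj hexX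
    (IsGP.of_projective hP) (s.isGP (1 + 1))
  obtain ⟨t, ⟨eX⟩⟩ := hXgp.norm 2
  -- now splice
  have hEVA : ExtVanish S A := by
    refine extVanish_summand (LinearMap.inl S A P) (LinearMap.fst S A P) rfl ?_
    exact extVanish_of_equiv e.symm (s.ev 1)
  refine ⟨spliceLadder s t A Tm (s.Pm 1) hTproj (s.proj 1) ι₀ π₀ hι₀inj hπ₀surj hex₀
    ιA1 (eX.toLinearMap.comp π₁) hιA1inj (eX.surjective.comp Rm.mkQ_surjective) ?_ hEVA,
    1, ⟨LinearEquiv.refl S A⟩⟩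
  rw [ker_equiv_comp, hπ₁, Submodule.ker_mkQ]

end OfProd

end GPAux
namespace GPAux

variable {S : Type u} [Ring S]

open Function Submodule LinearMap

section Resolving

variable {A B C : Type u} [AddCommGroup A] [Module S A] [AddCommGroup B] [Module S B]
variable [AddCommGroup C] [Module S C]

/-- Gorenstein projectives are resolving: the kernel of a surjection between Gorenstein
projectives is Gorenstein projective. -/
theorem IsGP.kernel (f : A →ₗ[S] B) (g : B →ₗ[S] C) (hf : Function.Injective f)
    (hg : Function.Surjective g) (hfg : range f = ker g) (hB : IsGP S B) (hC : IsGP S C) :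
    IsGP S A := by
  classical
  obtain ⟨C₀, Q, _, _, _, _, hQproj, hC₀gp, hC₀ev, ιc, πc, hιcinj, hπcsurj, hexc⟩ :=
    hC.exists_pres
  set Xm : Submodule S (B × Q) := ker ((g.comp (LinearMap.fst S B Q)) -
    (πc.comp (LinearMap.snd S B Q))) with hXm
  have memX : ∀ x : B × Q, x ∈ Xm ↔ g x.1 = πc x.2 := by
    intro x
    simp [hXm, LinearMap.mem_ker, sub_eq_zero]
  -- SES : 0 → C₀ → X → B → 0
  have haXmem : ∀ z : C₀, (((0 : B), ιc z) : B × Q) ∈ Xm := by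
    intro z
    rw [memX]
    simp [pcompι_eq_zero ιc πc hexc z]
  set aX : C₀ →ₗ[S] Xm := ((LinearMap.inr S B Q).comp ιc).codRestrict Xm haXmem with haX
  set bX : Xm →ₗ[S] B := (LinearMap.fst S B Q).comp Xm.subtype with hbX
  have haXinj : Injective aX := by
    intro z z' h
    have := congrArg (fun t => (t : B × Q).2) (Subtype.ext_iff.mp h)
    exact hιcinj this
  have hbXsurj : Surjective bX := by
    intro b
    obtain ⟨q, hq⟩ := hπcsurj (g b)
    exact ⟨⟨(b, q), (memX _).2 hq.symm⟩, rfl⟩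
  have hexaX : range aX = ker bX := by
    ext x
    constructor
    · rintro ⟨z, rfl⟩; rfl
    · intro hx
      have hx1 : (x : B × Q).1 = 0 := hx
      have : πc (x : B × Q).2 = 0 := by
        rw [← ((memX _).1 x.2), hx1, map_zero]
      have : (x : B × Q).2 ∈ range ιc := by rw [hexc]; exact this
      obtain ⟨z, hz⟩ := this
      refine ⟨z, Subtype.ext ?_⟩
      rw [haX]
      have : ((aX z : B × Q)) = (0, ιc z) := rfl
      rw [this]
      exact (Prod.ext_iff.mpr ⟨hx1, hz.symm⟩).symm
  have hXgp : IsGP S Xm := IsGP.ext_closure aX bX haXinj hbXsurj hexaX hC₀gp hB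
  -- X ≃ A × Q
  set sndX : Xm →ₗ[S] Q := (LinearMap.snd S B Q).comp Xm.subtype with hsndX
  have hsndXsurj : Surjective sndX := by
    intro q
    obtain ⟨b, hb⟩ := hg (πc q)
    exact ⟨⟨(b, q), (memX _).2 hb⟩, rfl⟩
  haveI := hQproj
  obtain ⟨σ, hσ⟩ := Module.projective_lifting_property sndX LinearMap.id hsndXsurj
  have hσ' : ∀ q, sndX (σ q) = q := by
    intro q; have := congrArg (fun t => t q) hσ; simpa using this
  have hfmem : ∀ a : A, ((f a, (0 : Q)) : B × Q) ∈ Xm := by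
    intro a
    rw [memX]
    simp [pcompι_eq_zero f g hfg a]
  set jA : A →ₗ[S] Xm := ((LinearMap.inl S B Q).comp f).codRestrict Xm hfmem with hjA
  set φ : A × Q →ₗ[S] Xm := jA.comp (LinearMap.fst S A Q) + σ.comp (LinearMap.snd S A Q)
    with hφ
  have hφapp : ∀ x : A × Q, φ x = jA x.1 + σ x.2 := fun x => rfl
  have hφinj : Injective φ := by
    intro x y hxy
    rw [← sub_eq_zero] at hxy ⊢
    rw [← map_sub] at hxy
    set d := x - y with hd
    have h2 : sndX (φ d) = 0 := by rw [hxy, map_zero]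
    rw [hφapp, map_add, hσ'] at h2
    have hjA2 : sndX (jA d.1) = 0 := rfl
    rw [hjA2, zero_add] at h2
    have hφ1 : φ d = jA d.1 := by rw [hφapp, h2, map_zero, add_zero]
    have h3 : jA d.1 = 0 := by rw [← hφ1, hxy]
    have h4 : f d.1 = 0 := by
      have := congrArg (fun t => (t : B × Q).1) (Subtype.ext_iff.mp h3)
      exact this
    have h5 : d.1 = 0 := hf (by rw [h4, map_zero])
    rw [hd, Prod.ext_iff]
    exact ⟨h5, h2⟩
  have hφsurj : Surjective φ := by
    intro x
    set q := sndX x with hq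
    have h1 : sndX (x - σ q) = 0 := by rw [map_sub, hσ', hq, sub_self]
    have h2 : ((x - σ q : Xm) : B × Q).2 = 0 := h1
    have h3 : g ((x - σ q : Xm) : B × Q).1 = 0 := by
      rw [(memX _).1 (x - σ q).2, h2, map_zero]
    have : ((x - σ q : Xm) : B × Q).1 ∈ range f := by rw [hfg]; exact h3
    obtain ⟨a, ha⟩ := this
    refine ⟨(a, q), ?_⟩
    rw [hφapp]
    have : jA a = x - σ q := by
      apply Subtype.ext
      have : ((jA a : B × Q)) = (f a, 0) := rfl
      rw [this]
      exact (Prod.ext_iff.mpr ⟨ha.symm, h2⟩).symm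
    rw [this]
    abel
  have : IsGP S (A × Q) := hXgp.of_equiv (LinearEquiv.ofBijective φ ⟨hφinj, hφsurj⟩).symm
  exact this.of_prod hQproj

end Resolving

end GPAux
namespace GPAux

variable {S : Type u} [Ring S]

open Function Submodule LinearMap

section LELayer

variable {M K T : Type u} [AddCommGroup M] [Module S M] [AddCommGroup K] [Module S K]
variable [AddCommGroup T] [Module S T]

theorem gp_of_le_zero (h : GorensteinProjectiveDimensionLE S M 0) : IsGP S M := by
  obtain ⟨E, hE⟩ := h
  haveI h1 : Subsingleton (E.G 1) := E.trivial_of_gt 1 Nat.zero_lt_one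
  have hker : ker E.aug = ⊥ := by
    rw [← E.exact_aug]
    ext y
    simp only [Submodule.mem_bot, LinearMap.mem_range]
    constructor
    · rintro ⟨x, rfl⟩
      rw [Subsingleton.elim x 0, map_zero]
    · rintro rfl
      exact ⟨0, map_zero _⟩
  have e := LinearEquiv.ofBijective E.aug ⟨LinearMap.ker_eq_bot.mp hker, E.aug_surjective⟩
  exact (isGP_of_isGorensteinProjective (hE 0 le_rfl)).of_equiv e

theorem le_zero_of_gp (h : IsGP S M) : GorensteinProjectiveDimensionLE S M 0 := by
  refine ⟨{ G := fun i => match i with | 0 => M | (_ + 1) => PUnit.{u + 1}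
            acg := fun i => match i with
              | 0 => inferInstanceAs (AddCommGroup M)
              | (_ + 1) => inferInstanceAs (AddCommGroup PUnit.{u + 1})
            mod := fun i => match i with
              | 0 => inferInstanceAs (Module S M)
              | (_ + 1) => inferInstanceAs (Module S PUnit.{u + 1})
            d := fun i => match i with | 0 => (0 : PUnit.{u + 1} →ₗ[S] M) | (_ + 1) => 0
            aug := (LinearMap.id : M →ₗ[S] M)
            aug_surjective := fun x => ⟨x, rfl⟩
            exact_aug := ?_
            exact := ?_
            trivial_of_gt := ?_ }, ?_⟩
  · rw [LinearMap.range_zero, LinearMap.ker_id]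
  · intro i
    match i with
    | 0 =>
      rw [LinearMap.range_zero]
      ext x
      have hx : x = 0 := Subsingleton.elim x 0
      subst hx
      simp
    | (k + 1) =>
      rw [LinearMap.range_zero]
      ext x
      have hx : x = 0 := Subsingleton.elim x 0
      subst hx
      simp
  · intro i hi
    match i with
    | (k + 1) => exact inferInstanceAs (Subsingleton PUnit)
  · intro i hi
    match i with
    | 0 => exact isGorensteinProjective_of_isGP h

/-- Prepend a Gorenstein projective on top of a resolution of the kernel. -/
theorem le_head (n : ℕ) (ι : K →ₗ[S] T) (π : T →ₗ[S] M) (hι : Function.Injective ι)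
    (hπ : Function.Surjective π) (hex : range ι = ker π) (hT : IsGP S T)
    (hK : GorensteinProjectiveDimensionLE S K n) :
    GorensteinProjectiveDimensionLE S M (n + 1) := by
  obtain ⟨E, hE⟩ := hK
  refine ⟨{ G := fun i => match i with | 0 => T | (k + 1) => E.G k
            acg := fun i => match i with
              | 0 => inferInstanceAs (AddCommGroup T)
              | (k + 1) => inferInstanceAs (AddCommGroup (E.G k))
            mod := fun i => match i with
              | 0 => inferInstanceAs (Module S T)
              | (k + 1) => inferInstanceAs (Module S (E.G k))
            d := fun i => match i with | 0 => ι.comp E.aug | (k + 1) => E.d k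
            aug := π
            aug_surjective := hπ
            exact_aug := ?_
            exact := ?_
            trivial_of_gt := ?_ }, ?_⟩
  · show range (ι.comp E.aug) = ker π
    rw [LinearMap.range_comp, LinearMap.range_eq_top.2 E.aug_surjective, Submodule.map_top]
    exact hex
  · intro i
    match i with
    | 0 =>
      show range (E.d 0) = ker (ι.comp E.aug)
      rw [LinearMap.ker_comp, LinearMap.ker_eq_bot.2 hι, E.exact_aug]
      rfl
    | (k + 1) => exact E.exact k
  · intro i hi
    match i with
    | (k + 1) => exact E.trivial_of_gt k (by omega)
  · intro i hi
    match i with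
    | 0 => exact isGorensteinProjective_of_isGP hT
    | (k + 1) => exact hE k (by omega)

/-- Truncate a resolution: the kernel of the augmentation has dimension one less. -/
theorem le_trunc (n : ℕ) (E : FiniteExactSequenceTo S M (n + 1))
    (hE : ∀ i ≤ n + 1, IsGorensteinProjective S (E.G i)) :
    GorensteinProjectiveDimensionLE S (↥(ker E.aug)) n := by
  have hmem : ∀ x : E.G 1, E.d 0 x ∈ ker E.aug := by
    intro x
    rw [← E.exact_aug]
    exact LinearMap.mem_range_self _ _
  refine ⟨{ G := fun i => E.G (i + 1)
            acg := fun i => inferInstanceAs (AddCommGroup (E.G (i + 1)))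
            mod := fun i => inferInstanceAs (Module S (E.G (i + 1)))
            d := fun i => E.d (i + 1)
            aug := (E.d 0).codRestrict (ker E.aug) hmem
            aug_surjective := ?_
            exact_aug := ?_
            exact := fun i => E.exact (i + 1)
            trivial_of_gt := ?_ }, ?_⟩
  · rintro ⟨y, hy⟩
    rw [← E.exact_aug] at hy
    obtain ⟨x, hx⟩ := hy
    exact ⟨x, Subtype.ext hx⟩
  · show range (E.d 1) = ker ((E.d 0).codRestrict (ker E.aug) hmem)
    rw [LinearMap.ker_codRestrict]
    exact E.exact 0
  · intro i hi
    exact E.trivial_of_gt (i + 1) (by omega)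
  · intro i hi
    exact hE (i + 1) (by omega)

end LELayer

end GPAux
namespace GPAux

variable {S : Type u} [Ring S]

open Function Submodule LinearMap

theorem stepA (n : ℕ) :
    ∀ (M₃ M₂ M₁ : Type u) [AddCommGroup M₃] [Module S M₃] [AddCommGroup M₂] [Module S M₂]
      [AddCommGroup M₁] [Module S M₁] (f : M₃ →ₗ[S] M₂) (g : M₂ →ₗ[S] M₁),
      Function.Injective f → Function.Surjective g → range f = ker g → IsGP S M₁ →
      GorensteinProjectiveDimensionLE S M₃ n → GorensteinProjectiveDimensionLE S M₂ n := by
  induction n with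
  | zero =>
    intro M₃ M₂ M₁ _ _ _ _ _ _ f g hf hg hfg hM₁ h3
    exact le_zero_of_gp (IsGP.ext_closure f g hf hg hfg (gp_of_le_zero h3) hM₁)
  | succ n IH =>
    intro M₃ M₂ M₁ _ _ _ _ _ _ f g hf hg hfg hM₁ h3
    classical
    obtain ⟨E, hE⟩ := h3
    obtain ⟨G', Q, _, _, _, _, hQproj, hG'gp, hG'ev, ιq, πq, hιqinj, hπqsurj, hexq⟩ :=
      hM₁.exists_pres
    set Xm : Submodule S (M₂ × Q) := ker ((g.comp (LinearMap.fst S M₂ Q)) -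
      (πq.comp (LinearMap.snd S M₂ Q))) with hXm
    have memX : ∀ x : M₂ × Q, x ∈ Xm ↔ g x.1 = πq x.2 := by
      intro x; simp [hXm, LinearMap.mem_ker, sub_eq_zero]
    set sndX : Xm →ₗ[S] Q := (LinearMap.snd S M₂ Q).comp Xm.subtype with hsndX
    have hsndXsurj : Surjective sndX := by
      intro q
      obtain ⟨b, hb⟩ := hg (πq q)
      exact ⟨⟨(b, q), (memX _).2 hb⟩, rfl⟩
    haveI := hQproj
    obtain ⟨σ, hσ⟩ := Module.projective_lifting_property sndX LinearMap.id hsndXsurj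
    have hσ' : ∀ q, sndX (σ q) = q := by
      intro q; have := congrArg (fun t => t q) hσ; simpa using this
    set τ : Q →ₗ[S] M₂ := (LinearMap.fst S M₂ Q).comp (Xm.subtype.comp σ) with hτ
    have hgτ : ∀ q, g (τ q) = πq q := by
      intro q
      have h1 : g ((σ q : M₂ × Q).1) = πq ((σ q : M₂ × Q).2) := (memX _).1 (σ q).2
      have h2 : ((σ q : M₂ × Q).2) = q := hσ' q
      rw [h2] at h1
      exact h1
    set s : M₃ × Q →ₗ[S] M₂ :=
      f.comp (LinearMap.fst S M₃ Q) + τ.comp (LinearMap.snd S M₃ Q) with hs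
    have hsapp : ∀ x : M₃ × Q, s x = f x.1 + τ x.2 := fun _ => rfl
    have hssurj : Surjective s := by
      intro m
      obtain ⟨q, hq⟩ := hπqsurj (g m)
      have : m - τ q ∈ range f := by
        rw [hfg, LinearMap.mem_ker, map_sub, hgτ, hq, sub_self]
      obtain ⟨a, ha⟩ := this
      refine ⟨(a, q), ?_⟩
      rw [hsapp, ha]
      abel
    set c : (E.G 0 × Q) →ₗ[S] M₂ := s.comp ((E.aug).prodMap LinearMap.id) with hc
    have hcapp : ∀ x : E.G 0 × Q, c x = f (E.aug x.1) + τ x.2 := fun _ => rfl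
    have hcsurj : Surjective c := by
      refine hssurj.comp ?_
      rw [LinearMap.coe_prodMap]
      exact E.aug_surjective.prodMap Function.surjective_id
    have hτι : ∀ z : G', (τ.comp ιq) z ∈ range f := by
      intro z
      rw [hfg, LinearMap.mem_ker, LinearMap.comp_apply, hgτ, pcompι_eq_zero ιq πq hexq]
    set jm1 : G' →ₗ[S] M₃ := -((LinearEquiv.ofInjective f hf).symm.toLinearMap.comp
      ((τ.comp ιq).codRestrict (range f) hτι)) with hjm1
    have hfjm1 : ∀ z, f (jm1 z) = -(τ (ιq z)) := by
      intro z
      rw [hjm1]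
      simp only [LinearMap.neg_apply, map_neg, LinearMap.comp_apply, LinearEquiv.coe_coe]
      rw [LinearEquiv.ofInjective_symm_apply]
      rfl
    set j : G' →ₗ[S] M₃ × Q := jm1.prod ιq with hj
    have hjinj : Injective j := fun z z' h => hιqinj (congrArg Prod.snd h)
    have hexj : range j = ker s := by
      ext x
      constructor
      · rintro ⟨z, rfl⟩
        rw [LinearMap.mem_ker]
        have h0 : s (j z) = f (jm1 z) + τ (ιq z) := rfl
        rw [h0, hfjm1]
        abel
      · intro hx
        have hx' : f x.1 + τ x.2 = 0 := hx
        have h1 : πq x.2 = 0 := by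
          have h2 := congrArg g hx'
          rw [map_add, map_zero, pcompι_eq_zero f g hfg, zero_add, hgτ] at h2
          exact h2
        have : x.2 ∈ range ιq := by rw [hexq]; exact h1
        obtain ⟨z, hz⟩ := this
        have h2 : x.1 = jm1 z := by
          apply hf
          rw [hfjm1, hz]
          exact eq_neg_of_add_eq_zero_left hx'
        exact ⟨z, Prod.ext_iff.mpr ⟨h2.symm, hz⟩⟩
    have hNmem : ∀ (x : ↥(ker E.aug)), (((x : E.G 0), (0 : Q)) : E.G 0 × Q) ∈ ker c := by
      intro x
      rw [LinearMap.mem_ker, hcapp]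
      have hx : E.aug (x : E.G 0) = 0 := x.2
      simp [hx]
    set ιNK : ↥(ker E.aug) →ₗ[S] ↥(ker c) :=
      ((LinearMap.inl S (E.G 0) Q).comp (ker E.aug).subtype).codRestrict (ker c) hNmem
      with hιNK
    have hιNKinj : Injective ιNK := by
      intro x y h
      apply Subtype.ext
      have h1 := congrArg (fun t => ((t : E.G 0 × Q)).1) (Subtype.ext_iff.mp h)
      exact h1
    set w : ↥(ker c) →ₗ[S] M₃ × Q := ((E.aug).prodMap LinearMap.id).comp (ker c).subtype
      with hw
    have hwmem : ∀ x : ↥(ker c), w x ∈ range j := by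
      intro x
      rw [hexj, LinearMap.mem_ker]
      exact x.2
    set πKG : ↥(ker c) →ₗ[S] G' := (LinearEquiv.ofInjective j hjinj).symm.toLinearMap.comp
      (w.codRestrict (range j) hwmem) with hπKG
    have hjπ : ∀ x, j (πKG x) = w x := by
      intro x
      rw [hπKG]
      simp only [LinearMap.comp_apply, LinearEquiv.coe_coe]
      rw [LinearEquiv.ofInjective_symm_apply]
      rfl
    have hπKGsurj : Surjective πKG := by
      intro z
      obtain ⟨y, hy⟩ := E.aug_surjective ((j z).1)
      have hxmem : ((y, (j z).2) : E.G 0 × Q) ∈ ker c := by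
        rw [LinearMap.mem_ker, hcapp]
        have h0 : s (j z) = 0 := by
          rw [← LinearMap.mem_ker, ← hexj]
          exact LinearMap.mem_range_self _ _
        rw [hsapp] at h0
        rw [hy]
        exact h0
      refine ⟨⟨(y, (j z).2), hxmem⟩, ?_⟩
      apply hjinj
      rw [hjπ]
      have hwx : w (⟨(y, (j z).2), hxmem⟩ : ↥(ker c)) = (E.aug y, (j z).2) := rfl
      rw [hwx]
      exact Prod.ext_iff.mpr ⟨hy, rfl⟩
    have hexNK : range ιNK = ker πKG := by
      ext x
      constructor
      · rintro ⟨y, rfl⟩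
        show πKG (ιNK y) = 0
        apply hjinj
        rw [hjπ, map_zero]
        have h0 : w (ιNK y) = (E.aug (y : E.G 0), (0 : Q)) := rfl
        rw [h0]
        have hy0 : E.aug (y : E.G 0) = 0 := y.2
        rw [hy0]
        rfl
      · intro hx
        have hx' : πKG x = 0 := hx
        have hwx : w x = 0 := by rw [← hjπ, hx', map_zero]
        have h1 : E.aug ((x : E.G 0 × Q).1) = 0 := congrArg Prod.fst hwx
        have h2 : ((x : E.G 0 × Q).2) = (0 : Q) := congrArg Prod.snd hwx
        refine ⟨⟨(x : E.G 0 × Q).1, h1⟩, ?_⟩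
        apply Subtype.ext
        show (((x : E.G 0 × Q).1, (0 : Q)) : E.G 0 × Q) = (x : E.G 0 × Q)
        exact Prod.ext_iff.mpr ⟨rfl, h2.symm⟩
    have hKle := IH _ _ _ ιNK πKG hιNKinj hπKGsurj hexNK hG'gp (le_trunc n E hE)
    have hTgp : IsGP S (E.G 0 × Q) :=
      IsGP.prod (isGP_of_isGorensteinProjective (hE 0 (by omega))) (IsGP.of_projective hQproj)
    exact le_head n (ker c).subtype c Subtype.val_injective hcsurj
      (Submodule.range_subtype _) hTgp hKle

theorem stepB (n : ℕ) (M₃ M₂ M₁ : Type u) [AddCommGroup M₃] [Module S M₃] [AddCommGroup M₂]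
    [Module S M₂] [AddCommGroup M₁] [Module S M₁] (f : M₃ →ₗ[S] M₂) (g : M₂ →ₗ[S] M₁)
    (hf : Function.Injective f) (hg : Function.Surjective g) (hfg : range f = ker g)
    (hM₁ : IsGP S M₁) (h2 : GorensteinProjectiveDimensionLE S M₂ n) :
    GorensteinProjectiveDimensionLE S M₃ n := by
  classical
  match n with
  | 0 => exact le_zero_of_gp (IsGP.kernel f g hf hg hfg (gp_of_le_zero h2) hM₁)
  | (n + 1) =>
    obtain ⟨E, hE⟩ := h2
    have hKle : GorensteinProjectiveDimensionLE S (↥(ker E.aug)) n := le_trunc n E hE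
    set Tm : Submodule S (E.G 0) := comap E.aug (range f) with hTm
    have memT : ∀ x : E.G 0, x ∈ Tm ↔ E.aug x ∈ range f := fun _ => Iff.rfl
    -- 0 → T → E.G 0 → M₁ → 0
    have hexT : range Tm.subtype = ker (g.comp E.aug) := by
      rw [Submodule.range_subtype, LinearMap.ker_comp, ← hfg, hTm]
    have hTgp : IsGP S Tm := IsGP.kernel Tm.subtype (g.comp E.aug) Subtype.val_injective
      (hg.comp E.aug_surjective) hexT
      (isGP_of_isGorensteinProjective (hE 0 (by omega))) hM₁
    -- 0 → ker aug → T → M₃ → 0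
    have hKmem : ∀ x : ↥(ker E.aug), (x : E.G 0) ∈ Tm := by
      intro x
      rw [memT]
      have hx : E.aug (x : E.G 0) = 0 := x.2
      rw [hx]
      exact zero_mem _
    set ιKT : ↥(ker E.aug) →ₗ[S] Tm := ((ker E.aug).subtype).codRestrict Tm hKmem with hιKT
    have hιKTinj : Injective ιKT := by
      intro x y h
      have h1 : ((ιKT x : Tm) : E.G 0) = ((ιKT y : Tm) : E.G 0) := Subtype.ext_iff.mp h
      exact Subtype.ext h1
    have haumem : ∀ x : Tm, (E.aug.comp Tm.subtype) x ∈ range f := fun x => x.2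
    set πTM : Tm →ₗ[S] M₃ := (LinearEquiv.ofInjective f hf).symm.toLinearMap.comp
      ((E.aug.comp Tm.subtype).codRestrict (range f) haumem) with hπTM
    have hfπ : ∀ x : Tm, f (πTM x) = E.aug (x : E.G 0) := by
      intro x
      rw [hπTM]
      simp only [LinearMap.comp_apply, LinearEquiv.coe_coe]
      rw [LinearEquiv.ofInjective_symm_apply]
      rfl
    have hπTMsurj : Surjective πTM := by
      intro m
      obtain ⟨y, hy⟩ := E.aug_surjective (f m)
      have hyT : y ∈ Tm := by rw [memT, hy]; exact ⟨m, rfl⟩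
      exact ⟨⟨y, hyT⟩, hf (by rw [hfπ]; exact hy)⟩
    have hexKT : range ιKT = ker πTM := by
      ext x
      constructor
      · rintro ⟨y, rfl⟩
        have h0 : f (πTM (ιKT y)) = 0 := by
          rw [hfπ]
          exact y.2
        exact hf (by rw [h0, map_zero])
      · intro hx
        have hx' : πTM x = 0 := hx
        have h0 : E.aug (x : E.G 0) = 0 := by rw [← hfπ, hx', map_zero]
        exact ⟨⟨(x : E.G 0), h0⟩, Subtype.ext rfl⟩
    exact le_head n ιKT πTM hιKTinj hπTMsurj hexKT hTgp hKle

end GPAux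
/-- If `0 → M₃ → M₂ → M₁ → 0` is a short exact sequence of left `R`-modules
with `M₃ ≠ 0` and `M₁` Gorenstein projective, then `Gpd_R(M₃) = Gpd_R(M₂)`. -/
theorem gpd_eq_of_shortExact_of_gorensteinProjective
    (R : Type u) [Ring R]
    (M₃ M₂ M₁ : Type u) [AddCommGroup M₃] [Module R M₃] [AddCommGroup M₂] [Module R M₂]
    [AddCommGroup M₁] [Module R M₁]
    (hM₃ : Nontrivial M₃)
    (f : M₃ →ₗ[R] M₂) (g : M₂ →ₗ[R] M₁)
    (hf : Function.Injective f) (hg : Function.Surjective g)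
    (hfg : LinearMap.range f = LinearMap.ker g)
    (hM₁ : IsGorensteinProjective R M₁) :
    gpd R M₃ = gpd R M₂ := by
  have hM₁' : GPAux.IsGP R M₁ := GPAux.isGP_of_isGorensteinProjective hM₁
  unfold gpd
  congr 1
  ext k
  simp only [Set.mem_setOf_eq]
  constructor
  · rintro ⟨n, rfl, h⟩
    exact ⟨n, rfl, GPAux.stepA n M₃ M₂ M₁ f g hf hg hfg hM₁' h⟩
  · rintro ⟨n, rfl, h⟩
    exact ⟨n, rfl, GPAux.stepB n M₃ M₂ M₁ f g hf hg hfg hM₁' h⟩
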